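/- arXiv:1801.09090 — 6 statements merged into one kernel-verified Lean document; each statement's English description precedes it below -/
import Mathlib

section
/- Let λ be a partition and let z be a complex number with Re z > 0. Then the series Σ_{i=1}^∞ e^{z(λ_i − i + 1/2)} converges absolutely and Σ_{s∈λ} e^{z·c(s)} = (1/ς(z)) · ( Σ_{i=1}^∞ e^{z(λ_i − i + 1/2)} − 1/ς(z) ), where ς(z) = e^{z/2} − e^{−z/2}. -/
/-- For a partition `μ` (antitone `ℕ → ℕ`, zero-indexed, with
finitely many nonzero parts) and `z : ℂ` with `Re z > 0`, the series
`Σ_{i=1}^∞ e^{z(μ_i - i + 1/2)}` converges absolutely, and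
`Σ_{s ∈ μ} e^{z c(s)} = ς(z)⁻¹ (Σ_{i=1}^∞ e^{z(μ_i - i + 1/2)} - ς(z)⁻¹)`
where `ς(z) = e^{z/2} - e^{-z/2}`.  Boxes of row `i` (0-indexed) are `(i,j)` with
`j < μ i`, of content `j - i`; `λ_i - i + 1/2` in the 1-indexed convention becomes
`μ i - i - 1/2` in the 0-indexed one. -/
theorem stmt_1 (μ : ℕ → ℕ) (hμ : Antitone μ) (hfin : ∃ N, ∀ i, N ≤ i → μ i = 0)
    (z : ℂ) (hz : 0 < z.re) :
    Summable (fun i : ℕ => ‖Complex.exp (z * ((μ i : ℂ) - (i : ℂ) - 1 / 2))‖) ∧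
      ∑' i : ℕ, ∑ j ∈ Finset.range (μ i), Complex.exp (z * ((j : ℂ) - (i : ℂ))) =
        (Complex.exp (z / 2) - Complex.exp (-z / 2))⁻¹ *
          ((∑' i : ℕ, Complex.exp (z * ((μ i : ℂ) - (i : ℂ) - 1 / 2))) -
            (Complex.exp (z / 2) - Complex.exp (-z / 2))⁻¹) := by
  obtain ⟨N, hN⟩ := hfin
  have hre : (z / 2).re = z.re / 2 := by
    rw [div_eq_mul_inv, Complex.mul_re]
    norm_num
    ring
  have hE1 : Complex.exp z ≠ 1 := by
    intro h
    have h1 : ‖Complex.exp z‖ = 1 := by rw [h, norm_one]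
    rw [Complex.norm_exp] at h1
    have h2 := Real.exp_lt_exp.mpr hz
    rw [Real.exp_zero] at h2
    linarith
  have hEz0 : Complex.exp z - 1 ≠ 0 := sub_ne_zero.mpr hE1
  have hσ : Complex.exp (z / 2) - Complex.exp (-z / 2) ≠ 0 := by
    rw [sub_ne_zero]
    intro h
    have h1 : Real.exp ((z / 2).re) = Real.exp ((-z / 2).re) := by
      rw [← Complex.norm_exp, ← Complex.norm_exp, h]
    have h3 := Real.exp_injective h1
    rw [neg_div, Complex.neg_re, hre] at h3
    linarith
  have hnormEz : ‖Complex.exp (-z)‖ < 1 := by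
    rw [Complex.norm_exp, Complex.neg_re]
    exact Real.exp_lt_one_iff.mpr (by linarith)
  -- combine-exps facts
  have hg_eq : ∀ i : ℕ, Complex.exp (z * (-(i : ℂ) - 1 / 2)) =
      Complex.exp (-z / 2) * Complex.exp (-z) ^ i := by
    intro i
    rw [← Complex.exp_nat_mul, ← Complex.exp_add]
    congr 1; push_cast; ring
  have hg : Summable (fun i : ℕ => Complex.exp (z * (-(i : ℂ) - 1 / 2))) := by
    apply Summable.congr
      ((summable_geometric_of_norm_lt_one hnormEz).mul_left (Complex.exp (-z / 2)))
    intro i; exact (hg_eq i).symm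
  have hfg : ∀ i, N ≤ i →
      Complex.exp (z * ((μ i : ℂ) - (i : ℂ) - 1 / 2)) = Complex.exp (z * (-(i : ℂ) - 1 / 2)) := by
    intro i hi
    rw [hN i hi]; push_cast; ring_nf
  have hf : Summable (fun i : ℕ => Complex.exp (z * ((μ i : ℂ) - (i : ℂ) - 1 / 2))) := by
    rw [← summable_nat_add_iff N]
    apply Summable.congr ((summable_nat_add_iff N).mpr hg)
    intro i
    exact (hfg (i + N) (Nat.le_add_left N i)).symm
  refine ⟨?_, ?_⟩
  · exact summable_norm_iff.mpr hf
  -- row identity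
  have row : ∀ i m : ℕ,
      ∑ j ∈ Finset.range m, Complex.exp (z * ((j : ℂ) - (i : ℂ))) =
        (Complex.exp (z / 2) - Complex.exp (-z / 2))⁻¹ *
          (Complex.exp (z * ((m : ℂ) - (i : ℂ) - 1 / 2)) -
            Complex.exp (z * (-(i : ℂ) - 1 / 2))) := by
    intro i m
    have e1 : ∀ j : ℕ, Complex.exp (z * ((j : ℂ) - (i : ℂ))) =
        Complex.exp z ^ j * Complex.exp (-(i : ℂ) * z) := by
      intro j
      rw [← Complex.exp_nat_mul, ← Complex.exp_add]
      congr 1; ring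
    have e2 : Complex.exp (z * ((m : ℂ) - (i : ℂ) - 1 / 2)) =
        Complex.exp z ^ m * Complex.exp (-(i : ℂ) * z) * Complex.exp (-z / 2) := by
      rw [← Complex.exp_nat_mul, ← Complex.exp_add, ← Complex.exp_add]
      congr 1; ring
    have e3 : Complex.exp (z * (-(i : ℂ) - 1 / 2)) =
        Complex.exp (-(i : ℂ) * z) * Complex.exp (-z / 2) := by
      rw [← Complex.exp_add]
      congr 1; ring
    have hh : Complex.exp (-z / 2) * Complex.exp z = Complex.exp (z / 2) := by
      rw [← Complex.exp_add]; congr 1; ring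
    have hς1 : Complex.exp (z / 2) - Complex.exp (-z / 2) =
        Complex.exp (-z / 2) * (Complex.exp z - 1) := by
      rw [mul_sub, mul_one, hh]
    simp only [e1, e2, e3, ← Finset.sum_mul, geom_sum_eq hE1]
    rw [hς1]
    field_simp
  have hgsum : ∑' i : ℕ, Complex.exp (z * (-(i : ℂ) - 1 / 2)) =
      (Complex.exp (z / 2) - Complex.exp (-z / 2))⁻¹ := by
    rw [tsum_congr hg_eq, tsum_mul_left, tsum_geometric_of_norm_lt_one hnormEz]
    have hh : Complex.exp (z / 2) * Complex.exp (-z) = Complex.exp (-z / 2) := by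
      rw [← Complex.exp_add]; congr 1; ring
    have hς2 : Complex.exp (z / 2) - Complex.exp (-z / 2) =
        Complex.exp (z / 2) * (1 - Complex.exp (-z)) := by
      rw [mul_sub, mul_one, hh]
    have hinv : (Complex.exp (z / 2))⁻¹ = Complex.exp (-z / 2) := by
      rw [← Complex.exp_neg]; congr 1; ring
    rw [hς2, mul_inv, hinv]
  calc ∑' i : ℕ, ∑ j ∈ Finset.range (μ i), Complex.exp (z * ((j : ℂ) - (i : ℂ)))
      = ∑' i : ℕ, (Complex.exp (z / 2) - Complex.exp (-z / 2))⁻¹ *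
          (Complex.exp (z * ((μ i : ℂ) - (i : ℂ) - 1 / 2)) -
            Complex.exp (z * (-(i : ℂ) - 1 / 2))) := tsum_congr fun i => row i (μ i)
    _ = (Complex.exp (z / 2) - Complex.exp (-z / 2))⁻¹ *
          ((∑' i : ℕ, Complex.exp (z * ((μ i : ℂ) - (i : ℂ) - 1 / 2))) -
            ∑' i : ℕ, Complex.exp (z * (-(i : ℂ) - 1 / 2))) := by
        rw [tsum_mul_left, Summable.tsum_sub hf hg]
    _ = _ := by rw [hgsum]
end

section
/- Let λ be a partition with Frobenius coordinates (a_1,…,a_r | b_1,…,b_r). Then for every complex number z, (e^{z/2} − e^{−z/2}) · Σ_{s∈λ} e^{z·c(s)} = Σ_{j=1}^{r} ( e^{z(a_j + 1/2)} − e^{−z(b_j + 1/2)} ). -/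
/-- The Frobenius rank of a partition `μ` (0-indexed): `r = #{i : λ_i ≥ i}` in the
1-indexed convention, i.e. the number of indices `i` with `i < μ i`. -/
noncomputable def frobeniusRank (μ : ℕ → ℕ) : ℕ := Nat.card {i : ℕ | i < μ i}

/-- The `j`-th part (0-indexed) of the conjugate partition of `μ`:
`μ' j = #{i : μ i > j}`, so that in the 1-indexed convention `λ'_j = μ' (j-1)`. -/
noncomputable def conjugatePart (μ : ℕ → ℕ) (j : ℕ) : ℕ := Nat.card {i : ℕ | j < μ i}

lemma lower_eq_Iio {S : Set ℕ} (hS : ∀ a b : ℕ, a ≤ b → b ∈ S → a ∈ S)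
    (hfin : S.Finite) : S = Set.Iio (Nat.card S) := by
  have hn : Nat.card S = hfin.toFinset.card := by
    rw [Nat.card_eq_card_finite_toFinset hfin]
  ext i
  simp only [Set.mem_Iio]
  constructor
  · intro hi
    have hsub : Finset.Iic i ⊆ hfin.toFinset := by
      intro a ha
      simp only [Finset.mem_Iic] at ha
      simp only [Set.Finite.mem_toFinset]
      exact hS a i ha hi
    have := Finset.card_le_card hsub
    simp [Nat.card_Iic] at this
    omega
  · intro hi
    by_contra hiS
    have hsub : hfin.toFinset ⊆ Finset.range i := by
      intro a ha
      simp only [Set.Finite.mem_toFinset] at ha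
      simp only [Finset.mem_range]
      by_contra h
      exact hiS (hS i a (by omega) ha)
    have := Finset.card_le_card hsub
    simp [Finset.card_range] at this
    omega

lemma conj_iff {μ : ℕ → ℕ} (hμ : Antitone μ) {N : ℕ} (hN : ∀ i, N ≤ i → μ i = 0)
    (j i : ℕ) : i < conjugatePart μ j ↔ j < μ i := by
  have h := lower_eq_Iio (S := {i : ℕ | j < μ i})
    (fun a b hab hb => lt_of_lt_of_le hb (hμ hab))
    (Set.Finite.subset (Set.finite_Iio N) (by
      intro a ha
      simp only [Set.mem_setOf_eq] at ha
      simp only [Set.mem_Iio]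
      by_contra h
      rw [hN a (by omega)] at ha
      omega))
  have := Set.ext_iff.mp h i
  simpa [conjugatePart] using this.symm

lemma rank_iff {μ : ℕ → ℕ} (hμ : Antitone μ) {N : ℕ} (hN : ∀ i, N ≤ i → μ i = 0)
    (i : ℕ) : i < frobeniusRank μ ↔ i < μ i := by
  have h := lower_eq_Iio (S := {i : ℕ | i < μ i})
    (fun a b hab hb => lt_of_le_of_lt hab (lt_of_lt_of_le hb (hμ hab)))
    (Set.Finite.subset (Set.finite_Iio N) (by
      intro a ha
      simp only [Set.mem_setOf_eq] at ha
      simp only [Set.mem_Iio]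
      by_contra h
      rw [hN a (by omega)] at ha
      omega))
  have := Set.ext_iff.mp h i
  simpa [frobeniusRank] using this.symm

lemma hook_decomp {μ : ℕ → ℕ} (hμ : Antitone μ) {N : ℕ} (hN : ∀ i, N ≤ i → μ i = 0)
    (F : ℕ → ℕ → ℂ) :
    ∑ i ∈ Finset.range N, ∑ j ∈ Finset.range (μ i), F i j =
    ∑ d ∈ Finset.range (frobeniusRank μ),
      ((∑ j ∈ Finset.Ico d (μ d), F d j) +
        ∑ i ∈ Finset.Ico (d + 1) (conjugatePart μ d), F i d) := by
  have hrN : frobeniusRank μ ≤ N := by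
    by_contra h
    have := (rank_iff hμ hN N).mp (by omega)
    rw [hN N le_rfl] at this
    omega
  have hqN : ∀ j, conjugatePart μ j ≤ N := by
    intro j
    by_contra h
    have := (conj_iff hμ hN j N).mp (by omega)
    rw [hN N le_rfl] at this
    omega
  have splitr : ∀ i, ∑ j ∈ Finset.range (μ i), F i j =
      (∑ j ∈ Finset.range (min i (μ i)), F i j) +
        ∑ j ∈ Finset.Ico (min i (μ i)) (μ i), F i j := by
    intro i
    rw [Finset.range_eq_Ico, Finset.range_eq_Ico]
    exact (Finset.sum_Ico_consecutive (F i) (Nat.zero_le _) (min_le_right _ _)).symm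
  rw [Finset.sum_congr rfl (fun i _ => splitr i), Finset.sum_add_distrib]
  have arms : ∑ i ∈ Finset.range N, ∑ j ∈ Finset.Ico (min i (μ i)) (μ i), F i j =
      ∑ d ∈ Finset.range (frobeniusRank μ), ∑ j ∈ Finset.Ico d (μ d), F d j := by
    rw [← Finset.sum_subset (Finset.range_subset_range.mpr hrN) (by
      intro i _ hi
      have h1 : ¬ i < μ i := fun h => hi (Finset.mem_range.mpr ((rank_iff hμ hN i).mpr h))
      rw [min_eq_right (by omega), Finset.Ico_self, Finset.sum_empty])]
    apply Finset.sum_congr rfl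
    intro d hd
    have : d < μ d := (rank_iff hμ hN d).mp (Finset.mem_range.mp hd)
    rw [min_eq_left this.le]
  have legs : ∑ i ∈ Finset.range N, ∑ j ∈ Finset.range (min i (μ i)), F i j =
      ∑ d ∈ Finset.range (frobeniusRank μ),
        ∑ i ∈ Finset.Ico (d + 1) (conjugatePart μ d), F i d := by
    have e1 : ∀ i ∈ Finset.range N, ∑ j ∈ Finset.range (min i (μ i)), F i j =
        ∑ j ∈ Finset.range N, if j < i ∧ j < μ i then F i j else 0 := by
      intro i hi
      rw [← Finset.sum_filter]
      apply Finset.sum_congr _ (fun _ _ => rfl)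
      ext j
      simp only [Finset.mem_filter, Finset.mem_range]
      have := Finset.mem_range.mp hi
      omega
    rw [Finset.sum_congr rfl e1, Finset.sum_comm]
    have e2 : ∀ j, ∑ i ∈ Finset.range N, (if j < i ∧ j < μ i then F i j else 0) =
        ∑ i ∈ Finset.Ico (j + 1) (conjugatePart μ j), F i j := by
      intro j
      rw [← Finset.sum_filter]
      apply Finset.sum_congr _ (fun _ _ => rfl)
      ext i
      simp only [Finset.mem_filter, Finset.mem_range, Finset.mem_Ico]
      have h1 := conj_iff hμ hN j i
      have h2 := hqN j
      omega
    rw [Finset.sum_congr rfl (fun j _ => e2 j)]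
    rw [← Finset.sum_subset (Finset.range_subset_range.mpr hrN) (by
      intro j _ hj
      have h1 : ¬ j < μ j := fun h => hj (Finset.mem_range.mpr ((rank_iff hμ hN j).mpr h))
      have h2 := conj_iff hμ hN j j
      rw [Finset.Ico_eq_empty (by omega), Finset.sum_empty])]
  rw [legs, arms, ← Finset.sum_add_distrib]
  exact Finset.sum_congr rfl (fun d _ => add_comm _ _)

lemma tele (a b : ℕ) (g : ℕ → ℂ) (hab : a ≤ b) :
    ∑ j ∈ Finset.Ico a b, (g (j + 1) - g j) = g b - g a := by
  rw [Finset.sum_Ico_eq_sub _ hab, Finset.sum_range_sub, Finset.sum_range_sub]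
  ring

/-- For a partition `μ` with Frobenius coordinates
`(a_1,…,a_r | b_1,…,b_r)` (0-indexed: `a_j = μ j - j - 1`, `b_j = μ' j - j - 1`),
and any `z : ℂ`,
`(e^{z/2} - e^{-z/2}) Σ_{s∈μ} e^{z c(s)} = Σ_{j=1}^r (e^{z(a_j+1/2)} - e^{-z(b_j+1/2)})`.
Here `a_j + 1/2 = μ j - j - 1/2` and `b_j + 1/2 = μ' j - j - 1/2` (0-indexed). -/
theorem stmt_2 (μ : ℕ → ℕ) (hμ : Antitone μ) (hfin : ∃ N, ∀ i, N ≤ i → μ i = 0)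
    (z : ℂ) :
    (Complex.exp (z / 2) - Complex.exp (-z / 2)) *
        ∑' i : ℕ, ∑ j ∈ Finset.range (μ i), Complex.exp (z * ((j : ℂ) - (i : ℂ))) =
      ∑ j ∈ Finset.range (frobeniusRank μ),
        (Complex.exp (z * ((μ j : ℂ) - (j : ℂ) - 1 / 2)) -
          Complex.exp (-z * ((conjugatePart μ j : ℂ) - (j : ℂ) - 1 / 2))) := by
  obtain ⟨N, hN⟩ := hfin
  have htsum : ∑' i : ℕ, ∑ j ∈ Finset.range (μ i), Complex.exp (z * ((j : ℂ) - (i : ℂ))) =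
      ∑ i ∈ Finset.range N, ∑ j ∈ Finset.range (μ i), Complex.exp (z * ((j : ℂ) - (i : ℂ))) := by
    apply tsum_eq_sum
    intro i hi
    simp only [Finset.mem_range, not_lt] at hi
    rw [hN i hi]
    simp
  rw [htsum, hook_decomp hμ hN, Finset.mul_sum]
  apply Finset.sum_congr rfl
  intro d hd
  have hd1 : d < μ d := (rank_iff hμ hN d).mp (Finset.mem_range.mp hd)
  have hd2 : d < conjugatePart μ d := (conj_iff hμ hN d d).mpr hd1
  rw [mul_add, Finset.mul_sum, Finset.mul_sum]
  have harm : ∑ j ∈ Finset.Ico d (μ d),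
      (Complex.exp (z / 2) - Complex.exp (-z / 2)) * Complex.exp (z * ((j : ℂ) - (d : ℂ))) =
      Complex.exp (z * ((μ d : ℂ) - (d : ℂ) - 1 / 2)) -
        Complex.exp (z * ((d : ℂ) - (d : ℂ) - 1 / 2)) := by
    rw [← tele d (μ d) (fun j => Complex.exp (z * ((j : ℂ) - (d : ℂ) - 1 / 2))) hd1.le]
    apply Finset.sum_congr rfl
    intro j _
    rw [sub_mul, ← Complex.exp_add, ← Complex.exp_add]
    congr 1 <;> push_cast <;> ring
  have hleg : ∑ i ∈ Finset.Ico (d + 1) (conjugatePart μ d),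
      (Complex.exp (z / 2) - Complex.exp (-z / 2)) * Complex.exp (z * ((d : ℂ) - (i : ℂ))) =
      (-Complex.exp (z * ((d : ℂ) - ((conjugatePart μ d : ℕ) : ℂ) + 1 / 2))) -
        (-Complex.exp (z * ((d : ℂ) - (((d + 1 : ℕ)) : ℂ) + 1 / 2))) := by
    rw [← tele (d + 1) (conjugatePart μ d)
      (fun i => -Complex.exp (z * ((d : ℂ) - (i : ℂ) + 1 / 2))) hd2]
    apply Finset.sum_congr rfl
    intro i _
    rw [sub_mul, ← Complex.exp_add, ← Complex.exp_add, neg_sub_neg]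
    congr 1 <;> push_cast <;> ring
  rw [harm, hleg]
  have e1 : Complex.exp (z * ((d : ℂ) - (d : ℂ) - 1 / 2)) =
      Complex.exp (z * ((d : ℂ) - (((d + 1 : ℕ)) : ℂ) + 1 / 2)) := by
    congr 1
    push_cast
    ring
  have e2 : Complex.exp (z * ((d : ℂ) - ((conjugatePart μ d : ℕ) : ℂ) + 1 / 2)) =
      Complex.exp (-z * ((conjugatePart μ d : ℂ) - (d : ℂ) - 1 / 2)) := by
    congr 1
    ring
  rw [e1, e2]
  ring
end

section
/- Let λ be a partition with Frobenius coordinates (a_1,…,a_r | b_1,…,b_r). Then for every integer k ≥ 0 and every integer N ≥ l(λ), Σ_{j=1}^{r} ( (a_j + 1/2)^k − (−b_j − 1/2)^k ) = Σ_{i=1}^{N} ( (λ_i − i + 1/2)^k − (−i + 1/2)^k ). -/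
lemma mem_iff_lt_ncard (S : Set ℕ) (hfin : S.Finite)
    (hdc : ∀ a b : ℕ, a ≤ b → b ∈ S → a ∈ S) (a : ℕ) : a ∈ S ↔ a < S.ncard := by
  constructor
  · intro ha
    have h : (Finset.Iic a : Set ℕ) ⊆ S := fun b hb => hdc b a (by simpa using hb) ha
    have h2 := Set.ncard_le_ncard h hfin
    rw [Set.ncard_coe_finset] at h2
    simp [Nat.card_Iic] at h2
    omega
  · intro ha
    by_contra h
    have hsub : S ⊆ (Finset.Iio a : Set ℕ) := by
      intro b hb
      by_contra hb'
      exact h (hdc a b (le_of_not_gt (by simpa using hb')) hb)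
    have h2 := Set.ncard_le_ncard hsub (Finset.Iio a).finite_toSet
    rw [Set.ncard_coe_finset] at h2
    simp [Nat.card_Iio] at h2
    omega


/-- For a partition `μ` of length `l` with Frobenius coordinates
`(a_1,…,a_r | b_1,…,b_r)` (0-indexed: `a_j = μ j - j - 1`, `b_j = μ' j - j - 1`),
every integer `k ≥ 0` and every `N ≥ l`:
`Σ_{j=1}^r ((a_j+1/2)^k - (-b_j-1/2)^k) = Σ_{i=1}^N ((λ_i-i+1/2)^k - (-i+1/2)^k)`.
In the 0-indexed convention, `a_j + 1/2 = μ j - j - 1/2`,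
`-b_j - 1/2 = -(μ' j - j - 1/2)`, `λ_i - i + 1/2 = μ i - i - 1/2`, and
`-i + 1/2 = -i - 1/2` (0-indexed `i`). -/
theorem stmt_3 (μ : ℕ → ℕ) (hμ : Antitone μ) (l : ℕ)
    (hl : ∀ i, μ i ≠ 0 ↔ i < l) (k : ℕ) (N : ℕ) (hN : l ≤ N) :
    ∑ j ∈ Finset.range (frobeniusRank μ),
        (((μ j : ℚ) - (j : ℚ) - 1 / 2) ^ k -
          (-((conjugatePart μ j : ℚ) - (j : ℚ) - 1 / 2)) ^ k) =
      ∑ i ∈ Finset.range N,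
        (((μ i : ℚ) - (i : ℚ) - 1 / 2) ^ k - (-(i : ℚ) - 1 / 2) ^ k) := by
  classical
  set r := frobeniusRank μ with hrdef
  set c := conjugatePart μ with hcdef
  -- basic facts
  have hfin1 : ({i : ℕ | i < μ i} : Set ℕ).Finite := by
    apply Set.Finite.subset (Finset.range l).finite_toSet
    intro i hi
    simp only [Set.mem_setOf_eq] at hi
    simp only [Finset.coe_range, Set.mem_Iio]
    exact (hl i).1 (by omega)
  have hfin2 : ∀ j, ({i : ℕ | j < μ i} : Set ℕ).Finite := by
    intro j
    apply Set.Finite.subset (Finset.range l).finite_toSet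
    intro i hi
    simp only [Set.mem_setOf_eq] at hi
    simp only [Finset.coe_range, Set.mem_Iio]
    exact (hl i).1 (by omega)
  have hrank : ∀ i, i < μ i ↔ i < r := by
    intro i
    have := mem_iff_lt_ncard {i : ℕ | i < μ i} hfin1
      (fun a b hab hb => by
        simp only [Set.mem_setOf_eq] at *
        have := hμ hab
        omega) i
    simpa [hrdef, frobeniusRank, Nat.card_coe_set_eq] using this
  have hconj : ∀ j i, j < μ i ↔ i < c j := by
    intro j i
    have := mem_iff_lt_ncard {i : ℕ | j < μ i} (hfin2 j)
      (fun a b hab hb => by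
        simp only [Set.mem_setOf_eq] at *
        have := hμ hab
        omega) i
    simpa [hcdef, conjugatePart, Nat.card_coe_set_eq] using this
  have hrl : r ≤ l := by
    by_contra h
    push_neg at h
    have h1 : l < μ l := (hrank l).2 h
    have := (hl l).1 (by omega)
    omega
  have hrN : r ≤ N := hrl.trans hN
  have hcl : ∀ j, c j ≤ l := by
    intro j
    by_contra h
    push_neg at h
    have : j < μ l := (hconj j l).2 h
    have := (hl l).1 (by omega)
    omega
  have hcr : ∀ j, j < r → j < c j := fun j hj => (hconj j j).1 ((hrank j).2 hj)
  have hμle : ∀ i, r ≤ i → μ i ≤ i := by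
    intro i hi
    by_contra h
    exact absurd ((hrank i).1 (by omega)) (by omega)
  have hcanti : ∀ j j', j ≤ j' → c j' ≤ c j := by
    intro j j' h
    apply Set.ncard_le_ncard _ (hfin2 j)
    intro i hi
    simp only [Set.mem_setOf_eq] at *
    omega
  -- the sets
  set e₁ : ℕ → ℕ := fun i => i - μ i with he₁
  set e₂ : ℕ → ℕ := fun j => c j - j - 1 with he₂
  set A := (Finset.Ico r N).image e₁ with hA
  set B := (Finset.range r).image e₂ with hB
  have inj1 : Set.InjOn e₁ (Finset.Ico r N) := by
    intro i hi i' hi' h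
    simp only [Finset.coe_Ico, Set.mem_Ico] at hi hi'
    have h1 := hμle i hi.1
    have h2 := hμle i' hi'.1
    rcases le_total i i' with hle | hle
    · have := hμ hle; simp only [he₁] at h; omega
    · have := hμ hle; simp only [he₁] at h; omega
  have inj2 : Set.InjOn e₂ (Finset.range r) := by
    intro j hj j' hj' h
    simp only [Finset.coe_range, Set.mem_Iio] at hj hj'
    have h1 := hcr j hj
    have h2 := hcr j' hj'
    rcases le_total j j' with hle | hle
    · have := hcanti j j' hle; simp only [he₂] at h; omega
    · have := hcanti j' j hle; simp only [he₂] at h; omega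
  have hdisj : Disjoint A B := by
    rw [Finset.disjoint_left]
    intro x hxA hxB
    simp only [hA, hB, Finset.mem_image, Finset.mem_Ico, Finset.mem_range] at hxA hxB
    obtain ⟨i, ⟨hri, hiN⟩, hxi⟩ := hxA
    obtain ⟨j, hjr, hxj⟩ := hxB
    have h1 := hμle i hri
    have h2 := hcr j hjr
    have h3 := hconj j i
    simp only [he₁] at hxi
    simp only [he₂] at hxj
    rcases Nat.lt_or_ge j (μ i) with h | h
    · have := h3.1 h; omega
    · have : ¬ i < c j := fun hh => by have := h3.2 hh; omega
      omega
  have hsub : A ∪ B ⊆ Finset.range N := by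
    intro x hx
    simp only [Finset.mem_union, hA, hB, Finset.mem_image, Finset.mem_Ico,
      Finset.mem_range] at hx ⊢
    rcases hx with ⟨i, ⟨hri, hiN⟩, hxi⟩ | ⟨j, hjr, hxj⟩
    · simp only [he₁] at hxi; omega
    · have := hcl j; simp only [he₂] at hxj; omega
  have hcardA : A.card = N - r := by
    rw [hA, Finset.card_image_of_injOn inj1, Nat.card_Ico]
  have hcardB : B.card = r := by
    rw [hB, Finset.card_image_of_injOn inj2, Finset.card_range]
  have hunion : A ∪ B = Finset.range N := by
    apply Finset.eq_of_subset_of_card_le hsub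
    rw [Finset.card_union_of_disjoint hdisj, hcardA, hcardB, Finset.card_range]
    omega
  -- transport the sum
  have key : ∑ i ∈ Finset.range N, (-(i : ℚ) - 1 / 2) ^ k =
      ∑ i ∈ Finset.Ico r N, ((μ i : ℚ) - (i : ℚ) - 1 / 2) ^ k +
        ∑ j ∈ Finset.range r, (-((c j : ℚ) - (j : ℚ) - 1 / 2)) ^ k := by
    rw [← hunion, Finset.sum_union hdisj, hA, hB,
      Finset.sum_image (fun x hx y hy h => inj1 hx hy h),
      Finset.sum_image (fun x hx y hy h => inj2 hx hy h)]
    congr 1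
    · apply Finset.sum_congr rfl
      intro i hi
      simp only [Finset.mem_Ico] at hi
      have h1 := hμle i hi.1
      simp only [he₁]
      congr 1
      rw [Nat.cast_sub h1]
      ring
    · apply Finset.sum_congr rfl
      intro j hj
      simp only [Finset.mem_range] at hj
      have h2 := hcr j hj
      simp only [he₂]
      congr 1
      rw [Nat.sub_sub, Nat.cast_sub (by omega : j + 1 ≤ c j)]
      push_cast
      ring
  -- conclude
  have split : ∑ i ∈ Finset.range N, ((μ i : ℚ) - (i : ℚ) - 1 / 2) ^ k =
      ∑ i ∈ Finset.range r, ((μ i : ℚ) - (i : ℚ) - 1 / 2) ^ k +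
        ∑ i ∈ Finset.Ico r N, ((μ i : ℚ) - (i : ℚ) - 1 / 2) ^ k :=
    (Finset.sum_range_add_sum_Ico _ hrN).symm
  rw [Finset.sum_sub_distrib, Finset.sum_sub_distrib, split, key]
  ring
end

section
/- Let λ be a partition. Then for every integer k ≥ 1, P_k(λ) = k! · Σ_{l,m ≥ 0, 2l+1+m = k} (2^{−2l}/(2l+1)!) · ch_m(λ), where ch_m(λ) = (1/m!) Σ_{s∈λ} c(s)^m. (This is the coefficient identity obtained by expanding ς(z)·Σ_{s∈λ} e^{z·c(s)} = Σ_k P_k(λ) z^k/k! with ς(z) = 2 sinh(z/2) = Σ_{l≥0} 2^{−2l} z^{2l+1}/(2l+1)!.) -/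
open Finset

lemma aux_mem_iff_lt_card {s : Set ℕ} (hfin : s.Finite)
    (hlow : ∀ a b, a ≤ b → b ∈ s → a ∈ s) (i : ℕ) :
    i ∈ s ↔ i < Nat.card s := by
  rw [Nat.card_eq_card_finite_toFinset hfin]
  constructor
  · intro hi
    have hsub : Finset.Iic i ⊆ hfin.toFinset := fun a ha =>
      hfin.mem_toFinset.mpr (hlow a i (Finset.mem_Iic.mp ha) hi)
    have := Finset.card_le_card hsub
    simpa using this
  · intro hi
    by_contra h
    have hsub : hfin.toFinset ⊆ Finset.range i := by
      intro b hb
      rw [Finset.mem_range]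
      by_contra hbi
      exact h (hlow i b (le_of_not_gt hbi) (hfin.mem_toFinset.mp hb))
    have := Finset.card_le_card hsub
    simp at this
    omega

lemma aux_frob_iff (μ : ℕ → ℕ) (hμ : Antitone μ) (N : ℕ) (hN : ∀ i, N ≤ i → μ i = 0) :
    ∀ i, i < frobeniusRank μ ↔ i < μ i := by
  intro i
  rw [frobeniusRank, ← aux_mem_iff_lt_card]
  · rfl
  · apply Set.Finite.subset (Set.finite_Iio N)
    intro a ha
    simp only [Set.mem_setOf_eq] at ha
    simp only [Set.mem_Iio]
    by_contra hc
    have := hN a (le_of_not_gt hc); omega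
  · intro a b hab hb
    simp only [Set.mem_setOf_eq] at *
    have := hμ hab
    omega

lemma aux_conj_iff (μ : ℕ → ℕ) (hμ : Antitone μ) (N : ℕ) (hN : ∀ i, N ≤ i → μ i = 0) :
    ∀ i j, i < conjugatePart μ j ↔ j < μ i := by
  intro i j
  rw [conjugatePart, ← aux_mem_iff_lt_card]
  · rfl
  · apply Set.Finite.subset (Set.finite_Iio N)
    intro a ha
    simp only [Set.mem_setOf_eq] at ha
    simp only [Set.mem_Iio]
    by_contra hc
    have := hN a (le_of_not_gt hc); omega
  · intro a b hab hb
    simp only [Set.mem_setOf_eq] at *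
    have := hμ hab
    omega

lemma aux_keyA (k : ℕ) (hk : 1 ≤ k) (c : ℚ) :
    (k.factorial : ℚ) * ∑ p ∈ (Finset.range k ×ˢ Finset.range k).filter
        (fun p => 2 * p.1 + 1 + p.2 = k),
      (((2:ℚ) ^ (2 * p.1))⁻¹ / ((2 * p.1 + 1).factorial : ℚ)) *
        ((1 / (p.2.factorial : ℚ)) * c ^ p.2)
    = (c + 1/2)^k - (c - 1/2)^k := by
  have h1 : (c + 1/2)^k - (c - 1/2)^k
      = ∑ o ∈ range (k+1), c ^ o * ((1/2:ℚ)^(k-o) - (-(1/2):ℚ)^(k-o)) * (k.choose o : ℚ) := by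
    have e1 := add_pow c (1/2 : ℚ) k
    have e2 := add_pow c (-(1/2) : ℚ) k
    rw [show c - 1/2 = c + (-(1/2)) by ring, e1, e2, ← Finset.sum_sub_distrib]
    apply Finset.sum_congr rfl
    intro o _
    ring
  rw [h1]
  rw [← Finset.sum_filter_of_ne (p := fun o => (k - o) % 2 = 1)
    (by
      intro o ho hne
      by_contra hmod
      have heven : Even (k - o) := Nat.even_iff.mpr (by omega)
      rw [heven.neg_pow] at hne
      simp at hne)]
  rw [Finset.mul_sum]
  apply Finset.sum_nbij' (i := fun p => p.2) (j := fun o => ((k - o - 1)/2, o))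
  · intro p hp
    simp only [Finset.mem_filter, Finset.mem_product, Finset.mem_range] at hp ⊢
    omega
  · intro o ho
    simp only [Finset.mem_filter, Finset.mem_product, Finset.mem_range] at ho ⊢
    omega
  · rintro ⟨l, m⟩ hp
    simp only [Finset.mem_filter, Finset.mem_product, Finset.mem_range] at hp
    have : 2 * l + 1 + m = k := hp.2
    simp only [Prod.mk.injEq]
    exact ⟨by omega, trivial⟩
  · intro o ho; rfl
  · intro p hp
    simp only [Finset.mem_filter, Finset.mem_product, Finset.mem_range] at hp
    obtain ⟨⟨h1', h2'⟩, h3⟩ := hp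
    set l := p.1
    set m := p.2
    have hkm : k - m = 2 * l + 1 := by omega
    have hmk : m ≤ k := by omega
    rw [hkm]
    have hodd : Odd (2 * l + 1) := ⟨l, by ring⟩
    rw [hodd.neg_pow]
    have hch : (k.choose m : ℚ)
        = (k.factorial : ℚ) / ((m.factorial : ℚ) * ((k-m).factorial : ℚ)) := by
      rw [Nat.cast_choose ℚ hmk]
    rw [hch, hkm]
    have hf1 : ((2*l+1).factorial : ℚ) ≠ 0 := Nat.cast_ne_zero.mpr (Nat.factorial_ne_zero _)
    have hf2 : ((m).factorial : ℚ) ≠ 0 := Nat.cast_ne_zero.mpr (Nat.factorial_ne_zero _)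
    have h2 : ((2:ℚ) ^ (2 * l)) ≠ 0 := by positivity
    field_simp
    ring
    rw [mul_assoc, ← mul_pow]; norm_num

lemma aux_keyB (μ : ℕ → ℕ) (N : ℕ) (k : ℕ)
    (hr : ∀ i, i < frobeniusRank μ ↔ i < μ i)
    (hcj : ∀ i j, i < conjugatePart μ j ↔ j < μ i)
    (hmono : ∀ i1 i2, i1 ≤ i2 → μ i2 ≤ μ i1)
    (hN : ∀ i, N ≤ i → μ i = 0) :
    ∑ i ∈ range N, (((μ i : ℚ) - i - 1/2)^k - (-(i:ℚ) - 1/2)^k)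
    = ∑ j ∈ range (frobeniusRank μ),
        (((μ j : ℚ) - (j : ℚ) - 1 / 2) ^ k -
          (-((conjugatePart μ j : ℚ) - (j : ℚ) - 1 / 2)) ^ k) := by
  set r := frobeniusRank μ with hrdef
  set ν := conjugatePart μ with hνdef
  set X : ℕ → ℚ := fun i => ((μ i : ℚ) - i - 1/2)^k with hX
  set Y : ℕ → ℚ := fun t => (-(t:ℚ) - 1/2)^k with hY
  set Z : ℕ → ℚ := fun j => (-((ν j : ℚ) - j - 1/2))^k with hZ
  have hrN : r ≤ N := by
    by_contra h
    have h2 := (hr N).mp (by omega)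
    have := hN N le_rfl
    omega
  have hμle : ∀ i, r ≤ i → μ i ≤ i := by
    intro i hi
    have := (hr i).not
    omega
  have hν1 : ∀ j, j < r → j + 1 ≤ ν j := by
    intro j hj
    have := (hcj j j).mpr ((hr j).mp hj)
    omega
  have hνN : ∀ j, ν j ≤ N := by
    intro j
    by_contra h
    have := (hcj N j).mp (by omega)
    have := hN N le_rfl
    omega
  have hνanti : ∀ j1 j2, j1 ≤ j2 → ν j2 ≤ ν j1 := by
    intro j1 j2 h12
    by_contra h
    have h2 := (hcj (ν j1) j2).mp (by omega)
    have h3 := (hcj (ν j1) j1).mpr (by omega)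
    omega
  set G : Finset ℕ := (Finset.Ico r N).image (fun i => i - μ i) with hG
  set H : Finset ℕ := (Finset.range r).image (fun j => ν j - j - 1) with hH
  have injG : ∀ x ∈ Finset.Ico r N, ∀ y ∈ Finset.Ico r N,
      x - μ x = y - μ y → x = y := by
    intro x hx y hy hxy
    simp only [Finset.mem_Ico] at hx hy
    have h1 := hμle x hx.1
    have h2 := hμle y hy.1
    rcases le_total x y with h | h
    · have := hmono x y h; omega
    · have := hmono y x h; omega
  have injH : ∀ x ∈ Finset.range r, ∀ y ∈ Finset.range r,
      ν x - x - 1 = ν y - y - 1 → x = y := by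
    intro x hx y hy hxy
    simp only [Finset.mem_range] at hx hy
    have h1 := hν1 x hx
    have h2 := hν1 y hy
    rcases le_total x y with h | h
    · have := hνanti x y h; omega
    · have := hνanti y x h; omega
  have hdisj : Disjoint G H := by
    rw [Finset.disjoint_left]
    intro a haG haH
    simp only [hG, hH, Finset.mem_image, Finset.mem_Ico, Finset.mem_range] at haG haH
    obtain ⟨i, ⟨hir, hiN⟩, hie⟩ := haG
    obtain ⟨j, hjr, hje⟩ := haH
    have h1 := hμle i hir
    have h2 := hν1 j hjr
    have key := hcj i j
    rcases lt_or_ge j (μ i) with hc | hc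
    · have : i < ν j := key.mpr hc
      omega
    · have : ¬ (i < ν j) := fun hcon => by have := key.mp hcon; omega
      omega
  have hGsub : G ⊆ Finset.range N := by
    intro a ha
    simp only [hG, Finset.mem_image, Finset.mem_Ico] at ha
    obtain ⟨i, ⟨hir, hiN⟩, hie⟩ := ha
    simp only [Finset.mem_range]
    omega
  have hHsub : H ⊆ Finset.range N := by
    intro a ha
    simp only [hH, Finset.mem_image, Finset.mem_range] at ha
    obtain ⟨j, hjr, hje⟩ := ha
    have h1 := hν1 j hjr
    have h2 := hνN j
    simp only [Finset.mem_range]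
    omega
  have hcardG : G.card = N - r := by
    rw [hG, Finset.card_image_of_injOn injG, Nat.card_Ico]
  have hcardH : H.card = r := by
    rw [hH, Finset.card_image_of_injOn injH, Finset.card_range]
  have hunion : G ∪ H = Finset.range N := by
    apply Finset.eq_of_subset_of_card_le (Finset.union_subset hGsub hHsub)
    rw [Finset.card_union_of_disjoint hdisj, hcardG, hcardH, Finset.card_range]
    omega
  have hYsum : ∑ i ∈ Finset.range N, Y i
      = ∑ i ∈ Finset.Ico r N, X i + ∑ j ∈ Finset.range r, Z j := by
    rw [← hunion, Finset.sum_union hdisj, hG, hH,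
      Finset.sum_image injG, Finset.sum_image injH]
    congr 1
    · apply Finset.sum_congr rfl
      intro i hi
      simp only [Finset.mem_Ico] at hi
      have h1 := hμle i hi.1
      simp only [hY, hX]
      congr 1
      push_cast [Nat.cast_sub h1]
      ring
    · apply Finset.sum_congr rfl
      intro j hj
      simp only [Finset.mem_range] at hj
      have h1 := hν1 j hj
      simp only [hY, hZ]
      congr 1
      have : ((ν j - j - 1 : ℕ) : ℚ) = (ν j : ℚ) - j - 1 := by
        have he : ν j - j - 1 = ν j - (j + 1) := by omega
        rw [he, Nat.cast_sub h1]
        push_cast; ring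
      rw [this]
      ring
  have hXsplit : ∑ i ∈ Finset.range N, X i
      = ∑ i ∈ Finset.range r, X i + ∑ i ∈ Finset.Ico r N, X i := by
    rw [Finset.range_eq_Ico, ← Finset.sum_Ico_consecutive _ (Nat.zero_le r) hrN]
    rw [Finset.range_eq_Ico]
  rw [Finset.sum_sub_distrib, hXsplit, hYsum, Finset.sum_sub_distrib]
  ring

/-- For a partition `μ` and every integer `k ≥ 1`:
`P_k(μ) = k! · Σ_{l,m ≥ 0, 2l+1+m = k} (2^{-2l}/(2l+1)!) · ch_m(μ)`,
where `P_k(μ) = Σ_{j=1}^r ((a_j+1/2)^k - (-b_j-1/2)^k)` (0-indexed: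
`a_j + 1/2 = μ j - j - 1/2`, `-b_j - 1/2 = -(μ' j - j - 1/2)`) and
`ch_m(μ) = (1/m!) Σ_{s∈μ} c(s)^m`.  The (finite) sum over pairs `(l, m)` with
`2l + 1 + m = k` is written over `Finset.range k ×ˢ Finset.range k`, which
contains all such pairs. -/
theorem stmt_6 (μ : ℕ → ℕ) (hμ : Antitone μ) (hfin : ∃ N, ∀ i, N ≤ i → μ i = 0)
    (k : ℕ) (hk : 1 ≤ k) :
    ∑ j ∈ Finset.range (frobeniusRank μ),
        (((μ j : ℚ) - (j : ℚ) - 1 / 2) ^ k -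
          (-((conjugatePart μ j : ℚ) - (j : ℚ) - 1 / 2)) ^ k) =
      (k.factorial : ℚ) *
        ∑ p ∈ (Finset.range k ×ˢ Finset.range k).filter
            (fun p => 2 * p.1 + 1 + p.2 = k),
          (((2 : ℚ) ^ (2 * p.1))⁻¹ / ((2 * p.1 + 1).factorial : ℚ)) *
            ((1 / (p.2.factorial : ℚ)) *
              ∑' i : ℕ, ∑ j ∈ Finset.range (μ i), ((j : ℚ) - (i : ℚ)) ^ p.2) := by
  obtain ⟨N, hN⟩ := hfin
  have hr := aux_frob_iff μ hμ N hN
  have hcj := aux_conj_iff μ hμ N hN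
  have hmono : ∀ i1 i2, i1 ≤ i2 → μ i2 ≤ μ i1 := fun i1 i2 h => hμ h
  -- replace tsum by finite sums
  have htsum : ∀ m : ℕ, (∑' i : ℕ, ∑ j ∈ Finset.range (μ i), ((j : ℚ) - (i : ℚ)) ^ m)
      = ∑ i ∈ Finset.range N, ∑ j ∈ Finset.range (μ i), ((j : ℚ) - (i : ℚ)) ^ m := by
    intro m
    apply tsum_eq_sum
    intro i hi
    rw [hN i (by simpa using hi)]
    simp
  rw [Finset.mul_sum]
  rw [show (∑ p ∈ (Finset.range k ×ˢ Finset.range k).filter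
            (fun p => 2 * p.1 + 1 + p.2 = k),
        (k.factorial : ℚ) *
          ((((2 : ℚ) ^ (2 * p.1))⁻¹ / ((2 * p.1 + 1).factorial : ℚ)) *
            ((1 / (p.2.factorial : ℚ)) *
              ∑' i : ℕ, ∑ j ∈ Finset.range (μ i), ((j : ℚ) - (i : ℚ)) ^ p.2)))
      = ∑ i ∈ Finset.range N, ∑ j ∈ Finset.range (μ i),
          ((((j : ℚ) - (i : ℚ)) + 1/2)^k - (((j : ℚ) - (i : ℚ)) - 1/2)^k) from ?_]
  · -- telescoping and keyB
    have htel : ∀ i : ℕ, ∑ j ∈ Finset.range (μ i),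
        ((((j : ℚ) - (i : ℚ)) + 1/2)^k - (((j : ℚ) - (i : ℚ)) - 1/2)^k)
        = ((μ i : ℚ) - i - 1/2)^k - (-(i:ℚ) - 1/2)^k := by
      intro i
      calc ∑ j ∈ Finset.range (μ i), ((((j:ℚ) - (i:ℚ)) + 1/2)^k - (((j:ℚ) - (i:ℚ)) - 1/2)^k)
          = ∑ j ∈ Finset.range (μ i),
              (((((j+1 : ℕ)):ℚ) - i - 1/2)^k - ((j:ℚ) - i - 1/2)^k) := by
            apply Finset.sum_congr rfl
            intro j _
            push_cast
            ring_nf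
        _ = (((μ i : ℕ):ℚ) - i - 1/2)^k - (((0:ℕ):ℚ) - i - 1/2)^k :=
            Finset.sum_range_sub (f := fun j => ((j:ℚ) - i - 1/2)^k) (n := μ i)
        _ = ((μ i : ℚ) - i - 1/2)^k - (-(i:ℚ) - 1/2)^k := by
            push_cast
            ring_nf
    rw [Finset.sum_congr rfl (fun i _ => htel i)]
    exact (aux_keyB μ N k hr hcj hmono hN).symm
  · -- swap sums and apply keyA
    simp only [htsum]
    -- expand all products into sums
    simp only [Finset.mul_sum]
    rw [Finset.sum_comm]
    apply Finset.sum_congr rfl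
    intro i _
    rw [Finset.sum_comm]
    apply Finset.sum_congr rfl
    intro j _
    have := aux_keyA k hk ((j : ℚ) - (i : ℚ))
    rw [← this, Finset.mul_sum]
end

section
/- Let λ be a partition with Frobenius coordinates (a_1,…,a_r | b_1,…,b_r). Then for every real t > 0, the series Σ_{i=1}^∞ e^{t(λ_i − i + 1/2)} converges and Σ_{i=1}^∞ e^{t(λ_i − i + 1/2)} = Σ_{j=1}^{r} ( e^{t(a_j + 1/2)} − e^{−t(b_j + 1/2)} ) + 1/(2·sinh(t/2)). -/
private lemma eq_of_lt_iff {x y : ℕ} (h : ∀ i, i < x ↔ i < y) : x = y := by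
  have h1 := h x; have h2 := h y; omega

private lemma lt_card_iff {P : ℕ → Prop} (hdown : ∀ i j, i ≤ j → P j → P i)
    (hN : ∃ N, ¬ P N) : ∀ i, i < Nat.card {i : ℕ | P i} ↔ P i := by
  classical
  have hiff : ∀ i, P i ↔ i < Nat.find hN := fun i =>
    ⟨fun hi => by
      by_contra hc
      exact Nat.find_spec hN (hdown _ i (not_lt.1 hc) hi),
     fun hi => not_not.mp (Nat.find_min hN hi)⟩
  have hset : {i : ℕ | P i} = Set.Iio (Nat.find hN) := Set.ext fun i => by simpa using hiff i
  intro i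
  rw [hset]
  have : Nat.card (Set.Iio (Nat.find hN)) = Nat.find hN := by simp [Nat.card_eq_card_toFinset]
  rw [this]
  exact (hiff i).symm

private lemma lt_rank_iff {μ : ℕ → ℕ} (hμ : Antitone μ) {N : ℕ} (h0 : ∀ i, N ≤ i → μ i = 0) :
    ∀ i, i < frobeniusRank μ ↔ i < μ i := by
  apply lt_card_iff
  · intro i j hij hj
    have := hμ hij
    omega
  · exact ⟨N, by simp [h0 N le_rfl]⟩

private lemma lt_conj_iff {μ : ℕ → ℕ} (hμ : Antitone μ) {N : ℕ} (h0 : ∀ i, N ≤ i → μ i = 0)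
    (j : ℕ) : ∀ i, i < conjugatePart μ j ↔ j < μ i := by
  apply lt_card_iff
  · intro a b hab hb
    have := hμ hab
    omega
  · exact ⟨N, by simp [h0 N le_rfl]⟩

private lemma summable_exp (t : ℝ) (ht : 0 < t) (μ : ℕ → ℕ) (hμ : Antitone μ) :
    Summable (fun i : ℕ => Real.exp (t * ((μ i : ℝ) - (i : ℝ) - 1 / 2))) := by
  have hρ : Real.exp (-t) < 1 := Real.exp_lt_one_iff.mpr (by linarith)
  have hge : Summable (fun i : ℕ => Real.exp (t * ((μ 0 : ℝ) - 1 / 2)) * Real.exp (-t) ^ i) :=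
    (summable_geometric_of_lt_one (Real.exp_nonneg _) hρ).mul_left _
  apply hge.of_nonneg_of_le (fun i => (Real.exp_pos _).le)
  intro i
  rw [← Real.exp_nat_mul, ← Real.exp_add]
  apply Real.exp_le_exp.mpr
  have h1 : (μ i : ℝ) ≤ (μ 0 : ℝ) := Nat.cast_le.mpr (hμ (Nat.zero_le i))
  have h2 : t * (μ i : ℝ) ≤ t * (μ 0 : ℝ) := by nlinarith
  nlinarith

private lemma zero_case (t : ℝ) (ht : 0 < t) (μ : ℕ → ℕ) (hz : ∀ i, μ i = 0) :
    ∑' i : ℕ, Real.exp (t * ((μ i : ℝ) - (i : ℝ) - 1 / 2)) =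
      (∑ j ∈ Finset.range (frobeniusRank μ),
        (Real.exp (t * ((μ j : ℝ) - (j : ℝ) - 1 / 2)) -
          Real.exp (-t * ((conjugatePart μ j : ℝ) - (j : ℝ) - 1 / 2)))) +
      1 / (2 * Real.sinh (t / 2)) := by
  have hr : frobeniusRank μ = 0 := by
    have hset : {i : ℕ | i < μ i} = ∅ := by ext i; simp [hz i]
    simp [frobeniusRank, hset]
  rw [hr]
  simp only [Finset.range_zero, Finset.sum_empty, zero_add]
  have hρ : Real.exp (-t) < 1 := Real.exp_lt_one_iff.mpr (by linarith)
  have h1 : (fun i : ℕ => Real.exp (t * ((μ i : ℝ) - (i : ℝ) - 1 / 2))) =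
      fun i : ℕ => Real.exp (-(t / 2)) * Real.exp (-t) ^ i := by
    funext i
    rw [← Real.exp_nat_mul, ← Real.exp_add, hz i]
    push_cast
    ring_nf
  rw [h1, tsum_mul_left, tsum_geometric_of_lt_one (Real.exp_nonneg _) hρ, Real.sinh_eq]
  have e1 : Real.exp (-(t / 2)) * Real.exp (t / 2) = 1 := by
    rw [← Real.exp_add]; norm_num
  have e2 : Real.exp (-(t / 2)) * Real.exp (-(t / 2)) = Real.exp (-t) := by
    rw [← Real.exp_add]; ring_nf
  have hne1 : (1 : ℝ) - Real.exp (-t) ≠ 0 := by linarith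
  have hne2 : Real.exp (t / 2) - Real.exp (-(t / 2)) ≠ 0 := by
    have : Real.exp (-(t/2)) < Real.exp (t/2) := Real.exp_lt_exp.mpr (by linarith)
    linarith
  rw [← div_eq_mul_inv, div_eq_div_iff hne1 (by intro h; apply hne2; linarith : (2:ℝ) * ((Real.exp (t/2) - Real.exp (-(t/2)))/2) ≠ 0)]
  linear_combination e1 - e2

private lemma main_lemma (t : ℝ) (ht : 0 < t) :
    ∀ m : ℕ, ∀ μ : ℕ → ℕ, Antitone μ → (∀ i, m ≤ i → μ i = 0) →
    ∑' i : ℕ, Real.exp (t * ((μ i : ℝ) - (i : ℝ) - 1 / 2)) =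
      (∑ j ∈ Finset.range (frobeniusRank μ),
        (Real.exp (t * ((μ j : ℝ) - (j : ℝ) - 1 / 2)) -
          Real.exp (-t * ((conjugatePart μ j : ℝ) - (j : ℝ) - 1 / 2)))) +
      1 / (2 * Real.sinh (t / 2)) := by
  intro m
  induction m with
  | zero =>
    intro μ hμ h0
    exact zero_case t ht μ fun i => h0 i (Nat.zero_le i)
  | succ m ih =>
    intro μ hμ h0
    by_cases hz0 : μ 0 = 0
    · exact zero_case t ht μ fun i => Nat.le_zero.mp (hz0 ▸ hμ (Nat.zero_le i))
    have hρ : Real.exp (-t) < 1 := Real.exp_lt_one_iff.mpr (by linarith)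
    set ν : ℕ → ℕ := fun i => μ (i + 1) - 1 with hνdef
    have hν : Antitone ν := fun a b hab => Nat.sub_le_sub_right (hμ (by omega)) 1
    have hν0 : ∀ i, m ≤ i → ν i = 0 := fun i hi => by
      show μ (i + 1) - 1 = 0
      rw [h0 (i + 1) (by omega)]
    have hrank := lt_rank_iff hμ h0
    have hconj := lt_conj_iff hμ h0
    have hrankν := lt_rank_iff hν hν0
    have hconjν := lt_conj_iff hν hν0
    have hr1 : 1 ≤ frobeniusRank μ := (hrank 0).mpr (by omega)
    have hrν : frobeniusRank ν = frobeniusRank μ - 1 := by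
      apply eq_of_lt_iff
      intro i
      have h1 := hrankν i
      have h2 := hrank (i + 1)
      have h3 : ν i = μ (i + 1) - 1 := rfl
      omega
    have hcν : ∀ j, conjugatePart ν j = conjugatePart μ (j + 1) - 1 := by
      intro j
      apply eq_of_lt_iff
      intro i
      have h1 := hconjν j i
      have h2 := hconj (j + 1) (i + 1)
      have h3 : ν i = μ (i + 1) - 1 := rfl
      omega
    have hm'1 : 1 ≤ conjugatePart μ 0 := by have := hconj 0 0; omega
    have hzero_iff : ∀ i, μ i = 0 ↔ conjugatePart μ 0 ≤ i := fun i => by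
      have := hconj 0 i; omega
    set k : ℕ := conjugatePart μ 0 - 1 with hkdef
    set f : ℕ → ℝ := fun i => Real.exp (t * ((μ i : ℝ) - (i : ℝ) - 1 / 2)) with hf
    set g : ℕ → ℝ := fun i => Real.exp (t * ((ν i : ℝ) - (i : ℝ) - 1 / 2)) with hg
    have Sf : Summable f := summable_exp t ht μ hμ
    have Sg : Summable g := summable_exp t ht ν hν
    have Sf' : Summable (fun i : ℕ => f (i + 1)) := (summable_nat_add_iff 1).mpr Sf
    set D : ℕ → ℝ := fun i => f (i + 1) - g i with hD
    have SD : Summable D := Sf'.sub Sg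
    set A : ℝ := Real.exp (-t * ((k : ℝ) + 1 / 2)) with hA
    have hDzero : ∀ i ∈ Finset.range k, D i = 0 := by
      intro i hi
      simp only [Finset.mem_range] at hi
      have hpos : 0 < μ (i + 1) := by have := hconj 0 (i + 1); omega
      have hν_i : ν i = μ (i + 1) - 1 := rfl
      show f (i + 1) - g i = 0
      rw [sub_eq_zero]
      simp only [hf, hg, hν_i]
      congr 1
      have : ((μ (i + 1) - 1 : ℕ) : ℝ) = (μ (i + 1) : ℝ) - 1 := by
        rw [Nat.cast_sub hpos]; norm_num
      rw [this]
      push_cast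
      ring
    have hμz : ∀ i : ℕ, μ (i + k + 1) = 0 := fun i => (hzero_iff _).mpr (by omega)
    have hνz : ∀ i : ℕ, ν (i + k) = 0 := fun i => by
      show μ (i + k + 1) - 1 = 0
      rw [hμz i]
    have hDtail : ∀ i : ℕ, D (i + k) = (A * (Real.exp (-t) - 1)) * Real.exp (-t) ^ i := by
      intro i
      show f (i + k + 1) - g (i + k) = _
      simp only [hf, hg, hμz i, hνz i]
      have e1 : Real.exp (t * (((0 : ℕ) : ℝ) - ((i + k + 1 : ℕ) : ℝ) - 1 / 2)) =
          A * Real.exp (-t) * Real.exp (-t) ^ i := by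
        rw [hA, ← Real.exp_nat_mul, ← Real.exp_add, ← Real.exp_add]
        congr 1
        push_cast
        ring
      have e2 : Real.exp (t * (((0 : ℕ) : ℝ) - ((i + k : ℕ) : ℝ) - 1 / 2)) =
          A * Real.exp (-t) ^ i := by
        rw [hA, ← Real.exp_nat_mul, ← Real.exp_add]
        congr 1
        push_cast
        ring
      rw [e1, e2]
      ring
    have hDsum : ∑' i, D i = -A := by
      rw [← Summable.sum_add_tsum_nat_add k SD, Finset.sum_eq_zero hDzero, zero_add,
        tsum_congr hDtail, tsum_mul_left,
        tsum_geometric_of_lt_one (Real.exp_nonneg _) hρ]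
      have hne : (1 : ℝ) - Real.exp (-t) ≠ 0 := by linarith
      field_simp
      ring
    have IH := ih ν hν hν0
    have hsplit : ∑' i, f i = f 0 + ∑' i, f (i + 1) := Summable.tsum_eq_zero_add Sf
    have hfg : (fun i : ℕ => f (i + 1)) = fun i : ℕ => g i + D i := by
      funext i; show f (i + 1) = g i + (f (i + 1) - g i); ring
    have hstep : ∑' i, f i = f 0 + ((∑' i, g i) + ∑' i, D i) := by
      rw [hsplit, hfg, Summable.tsum_add Sg SD]
    rw [hstep, IH, hDsum, hrν]
    obtain ⟨r', hr'⟩ : ∃ r', frobeniusRank μ = r' + 1 := ⟨frobeniusRank μ - 1, by omega⟩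
    rw [hr', Finset.sum_range_succ']
    have hterm0 : f 0 - A =
        Real.exp (t * ((μ 0 : ℝ) - ((0 : ℕ) : ℝ) - 1 / 2)) -
          Real.exp (-t * ((conjugatePart μ 0 : ℝ) - ((0 : ℕ) : ℝ) - 1 / 2)) := by
      have hcast : (conjugatePart μ 0 : ℝ) = (k : ℝ) + 1 := by
        rw [hkdef]; push_cast [Nat.cast_sub hm'1]; ring
      rw [hA, hf, hcast]
      push_cast
      ring_nf
    have hsum_eq : ∀ j ∈ Finset.range r',
        (Real.exp (t * ((ν j : ℝ) - (j : ℝ) - 1 / 2)) -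
          Real.exp (-t * ((conjugatePart ν j : ℝ) - (j : ℝ) - 1 / 2))) =
        (Real.exp (t * ((μ (j + 1) : ℝ) - ((j + 1 : ℕ) : ℝ) - 1 / 2)) -
          Real.exp (-t * ((conjugatePart μ (j + 1) : ℝ) - ((j + 1 : ℕ) : ℝ) - 1 / 2))) := by
      intro j hj
      simp only [Finset.mem_range] at hj
      have hjr : j + 1 < frobeniusRank μ := by omega
      have hμpos : j + 1 < μ (j + 1) := (hrank (j + 1)).mp hjr
      have hcpos : 1 ≤ conjugatePart μ (j + 1) := by
        have h01 := hconj (j + 1) 0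
        have : μ (j + 1) ≤ μ 0 := hμ (Nat.zero_le _)
        omega
      have hc1 : ((ν j : ℕ) : ℝ) = (μ (j + 1) : ℝ) - 1 := by
        show ((μ (j + 1) - 1 : ℕ) : ℝ) = _
        push_cast [Nat.cast_sub (by omega : 1 ≤ μ (j + 1))]
        ring
      have hc2 : ((conjugatePart ν j : ℕ) : ℝ) = (conjugatePart μ (j + 1) : ℝ) - 1 := by
        rw [hcν j]
        push_cast [Nat.cast_sub hcpos]
        ring
      rw [hc1, hc2]
      push_cast
      ring_nf
    have hrr : r' + 1 - 1 = r' := by omega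
    rw [hrr, Finset.sum_congr rfl hsum_eq, ← hterm0]
    ring

/-- For a partition `μ` with Frobenius coordinates
`(a_1,…,a_r | b_1,…,b_r)` and every real `t > 0`, the series
`Σ_{i=1}^∞ e^{t(λ_i - i + 1/2)}` converges and equals
`Σ_{j=1}^r (e^{t(a_j+1/2)} - e^{-t(b_j+1/2)}) + 1/(2 sinh(t/2))`.
In the 0-indexed convention `λ_i - i + 1/2 = μ i - i - 1/2`,
`a_j + 1/2 = μ j - j - 1/2` and `b_j + 1/2 = μ' j - j - 1/2`. -/
theorem stmt_7 (μ : ℕ → ℕ) (hμ : Antitone μ) (hfin : ∃ N, ∀ i, N ≤ i → μ i = 0)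
    (t : ℝ) (ht : 0 < t) :
    Summable (fun i : ℕ => Real.exp (t * ((μ i : ℝ) - (i : ℝ) - 1 / 2))) ∧
      ∑' i : ℕ, Real.exp (t * ((μ i : ℝ) - (i : ℝ) - 1 / 2)) =
        (∑ j ∈ Finset.range (frobeniusRank μ),
          (Real.exp (t * ((μ j : ℝ) - (j : ℝ) - 1 / 2)) -
            Real.exp (-t * ((conjugatePart μ j : ℝ) - (j : ℝ) - 1 / 2)))) +
        1 / (2 * Real.sinh (t / 2)) := by
  obtain ⟨N, hN⟩ := hfin
  exact ⟨summable_exp t ht μ hμ, main_lemma t ht N μ hμ hN⟩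
end

section
/- Let n ≥ 1, let q ∈ (0,1) and z_1,…,z_n > 0 be real numbers with q·e^{z_1+⋯+z_n} < 1. Then all the following sums over partitions converge absolutely, and ∏_{j=1}^{n} ς(z_j) · ⟨ ch_{z_1} ⋯ ch_{z_n} ⟩_q = Σ_{S ⊆ {1,…,n}} (−1)^{n−|S|} · ⟨ ∏_{i∈S} W_{z_i} ⟩_q · ∏_{j∉S} ς(z_j)^{−1}, where ch_z(λ) = Σ_{s∈λ} e^{z·c(s)} and W_z(λ) = Σ_{i=1}^∞ e^{z(λ_i − i + 1/2)}. -/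
/-- A partition: a nonincreasing sequence of nonnegative integers (0-indexed)
with only finitely many nonzero terms. -/
structure IntPartition where
  parts : ℕ → ℕ
  antitone' : Antitone parts
  finite_support' : ∃ N, ∀ i, N ≤ i → parts i = 0

/-- The weight `|λ| = Σ_i λ_i` of a partition. -/
noncomputable def IntPartition.wt (lam : IntPartition) : ℕ := ∑' i : ℕ, lam.parts i

/-- `ς(z) = e^{z/2} - e^{-z/2}`. -/
noncomputable def varsigma (z : ℝ) : ℝ := Real.exp (z / 2) - Real.exp (-z / 2)

/-- `ch_z(λ) = Σ_{s∈λ} e^{z c(s)}`, the sum over the boxes of the Young diagram;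
boxes of (0-indexed) row `i` are `(i,j)` with `j < λ_i`, of content `j - i`. -/
noncomputable def chz (z : ℝ) (lam : IntPartition) : ℝ :=
  ∑' i : ℕ, ∑ j ∈ Finset.range (lam.parts i), Real.exp (z * ((j : ℝ) - (i : ℝ)))

/-- `W_z(λ) = Σ_{i=1}^∞ e^{z(λ_i - i + 1/2)}` (0-indexed: `λ_i - i + 1/2 ↦ λ_i - i - 1/2`). -/
noncomputable def Wz (z : ℝ) (lam : IntPartition) : ℝ :=
  ∑' i : ℕ, Real.exp (z * ((lam.parts i : ℝ) - (i : ℝ) - 1 / 2))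

/-- The Bloch–Okounkov `q`-bracket `⟨f⟩_q = (Σ_λ f(λ) q^{|λ|}) / (Σ_λ q^{|λ|})`. -/
noncomputable def qbracket (q : ℝ) (f : IntPartition → ℝ) : ℝ :=
  (∑' lam : IntPartition, f lam * q ^ lam.wt) / (∑' lam : IntPartition, q ^ lam.wt)

namespace IntPartition

noncomputable def bdd (lam : IntPartition) : ℕ := lam.finite_support'.choose

lemma parts_bdd (lam : IntPartition) {i : ℕ} (h : lam.bdd ≤ i) : lam.parts i = 0 :=
  lam.finite_support'.choose_spec i h

lemma wt_eq_sum (lam : IntPartition) {N : ℕ} (hN : ∀ i, N ≤ i → lam.parts i = 0) :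
    lam.wt = ∑ i ∈ Finset.range N, lam.parts i := by
  apply tsum_eq_sum
  intro b hb
  exact hN b (by simpa using hb)

lemma parts_le_wt (lam : IntPartition) (i : ℕ) : lam.parts i ≤ lam.wt := by
  have h := lam.wt_eq_sum (N := max lam.bdd (i+1)) (fun j hj => lam.parts_bdd (le_trans (le_max_left _ _) hj))
  rw [h]
  exact Finset.single_le_sum (fun j _ => Nat.zero_le _) (Finset.mem_range.2 (by omega))

/-- Successive differences. -/
def diff (lam : IntPartition) : ℕ → ℕ := fun i => lam.parts i - lam.parts (i+1)

lemma parts_eq (lam : IntPartition) (i k : ℕ) :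
    lam.parts i = (∑ j ∈ Finset.Ico i (i+k), lam.diff j) + lam.parts (i+k) := by
  induction k with
  | zero => simp
  | succ k ih =>
      have h1 : i + (k+1) = (i+k)+1 := by omega
      rw [h1, Finset.sum_Ico_succ_top (by omega)]
      have h2 : lam.parts (i+k+1) ≤ lam.parts (i+k) := lam.antitone' (by omega)
      have h3 : lam.diff (i+k) = lam.parts (i+k) - lam.parts (i+k+1) := rfl
      omega

noncomputable def diffF (lam : IntPartition) : ℕ →₀ ℕ :=
  Finsupp.onFinset (Finset.range lam.bdd) lam.diff (by
    intro i hi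
    by_contra h
    simp only [Finset.mem_range, not_lt] at h
    apply hi
    show lam.parts i - lam.parts (i+1) = 0
    rw [lam.parts_bdd h, lam.parts_bdd (show lam.bdd ≤ i + 1 by omega)])

@[simp] lemma diffF_apply (lam : IntPartition) (i : ℕ) : lam.diffF i = lam.diff i := rfl

lemma support_diffF (lam : IntPartition) : lam.diffF.support ⊆ Finset.range lam.bdd :=
  Finsupp.support_onFinset_subset

lemma diffF_injective : Function.Injective diffF := by
  intro lam mu h
  have hd : lam.diff = mu.diff := by
    funext i; have := congrArg (fun f => f i) h; simpa using this
  have hp : lam.parts = mu.parts := by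
    funext i
    set N := max lam.bdd mu.bdd with hN
    have h1 := lam.parts_eq i N
    have h2 := mu.parts_eq i N
    rw [lam.parts_bdd (show lam.bdd ≤ i + N by omega), hd] at h1
    rw [mu.parts_bdd (show mu.bdd ≤ i + N by omega)] at h2
    omega
  cases lam; cases mu; simpa using hp

lemma wt_eq_diff_sum (lam : IntPartition) {N : ℕ} (hN : ∀ i, N ≤ i → lam.parts i = 0) :
    lam.wt = ∑ j ∈ Finset.range N, (j + 1) * lam.diff j := by
  rw [lam.wt_eq_sum hN]
  have key : ∀ M : ℕ, ∑ i ∈ Finset.range M, lam.parts i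
      = (∑ j ∈ Finset.range M, (j + 1) * lam.diff j) + M * lam.parts M := by
    intro M
    induction M with
    | zero => simp
    | succ M ih =>
        rw [Finset.sum_range_succ, Finset.sum_range_succ, ih]
        have hdm : lam.diff M + lam.parts (M+1) = lam.parts M :=
          Nat.sub_add_cancel (lam.antitone' (by omega))
        have h4 : M * lam.parts M = M * lam.diff M + M * lam.parts (M+1) := by
          rw [← hdm]; ring
        have h5 : (M+1) * lam.diff M = M * lam.diff M + lam.diff M := by ring
        have h6 : (M+1) * lam.parts (M+1) = M * lam.parts (M+1) + lam.parts (M+1) := by ring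
        omega
  rw [key N, hN N le_rfl]
  simp

lemma wt_eq_diffF_sum (lam : IntPartition) :
    lam.wt = lam.diffF.sum (fun j m => (j + 1) * m) := by
  rw [Finsupp.sum_of_support_subset lam.diffF lam.support_diffF _ (by simp)]
  simpa using lam.wt_eq_diff_sum (fun i hi => lam.parts_bdd hi)

end IntPartition

open Finset

lemma aux_geom_partial {a : ℝ} (h0 : 0 ≤ a) (h1 : a < 1) (s : Finset ℕ) :
    ∑ k ∈ s, a ^ k ≤ (1 - a)⁻¹ := by
  calc ∑ k ∈ s, a ^ k ≤ ∑' k : ℕ, a ^ k :=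
        Summable.sum_le_tsum s (fun k _ => by positivity) (summable_geometric_of_lt_one h0 h1)
    _ = (1 - a)⁻¹ := tsum_geometric_of_lt_one h0 h1

lemma aux_inv_le_exp {r a : ℝ} (h0 : 0 ≤ a) (har : a ≤ r) (hr1 : r < 1) :
    (1 - a)⁻¹ ≤ Real.exp (a / (1 - r)) := by
  have h1 : 0 < 1 - a := by linarith
  have h2 : 0 < 1 - r := by linarith
  rw [inv_le_iff_one_le_mul₀ h1]
  have h3 : 1 + a / (1 - r) ≤ Real.exp (a / (1 - r)) := by
    have := Real.add_one_le_exp (a / (1 - r)); linarith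
  have h4 : (1 : ℝ) ≤ (1 + a / (1-r)) * (1 - a) := by
    rw [← sub_nonneg]
    have e : (1 + a / (1-r)) * (1 - a) - 1 = a * (r - a) / (1 - r) := by field_simp; ring
    rw [e]
    have : 0 ≤ a * (r - a) := mul_nonneg h0 (by linarith)
    positivity
  calc (1:ℝ) ≤ (1 + a / (1-r)) * (1 - a) := h4
    _ ≤ Real.exp (a / (1-r)) * (1 - a) := by nlinarith [h3, h1.le]

/-- Summability of the partition generating function, over finsupps. -/
lemma summable_finsupp {r : ℝ} (hr0 : 0 ≤ r) (hr1 : r < 1) :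
    Summable (fun g : ℕ →₀ ℕ => r ^ (g.sum fun j m => (j + 1) * m)) := by
  set F : (ℕ →₀ ℕ) → ℝ := fun g => r ^ (g.sum fun j m => (j + 1) * m) with hF
  apply summable_of_sum_le (c := Real.exp (r / (1 - r) ^ 2)) (fun g => by positivity)
  intro u
  -- bound supports and values
  obtain ⟨N, M, hNM⟩ : ∃ N M : ℕ, ∀ g ∈ u, g.support ⊆ Finset.range N ∧ ∀ j, g j ≤ M := by
    refine ⟨(u.sup fun g => g.support.sup id) + 1, u.sup fun g => g.support.sup g, fun g hg => ⟨?_, ?_⟩⟩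
    · intro i hi
      simp only [Finset.mem_range]
      have : i ≤ u.sup fun g => g.support.sup id := by
        calc i = id i := rfl
          _ ≤ g.support.sup id := Finset.le_sup hi
          _ ≤ _ := Finset.le_sup (f := fun g => g.support.sup id) hg
      omega
    · intro j
      by_cases hj : j ∈ g.support
      · exact (Finset.le_sup (f := g) hj).trans (Finset.le_sup (f := fun g => g.support.sup g) hg)
      · simp [Finsupp.notMem_support_iff.1 hj]
  -- the restriction map
  set φ : (ℕ →₀ ℕ) → (Fin N → ℕ) := fun g j => g j with hφ
  have hFφ : ∀ g ∈ u, F g = ∏ j : Fin N, r ^ (((j : ℕ) + 1) * g j) := by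
    intro g hg
    simp only [hF]
    have h1 : (g.sum fun j m => (j + 1) * m) = ∑ j ∈ Finset.range N, (j + 1) * g j :=
      Finsupp.sum_of_support_subset g (hNM g hg).1 _ (by simp)
    rw [h1, ← Finset.prod_pow_eq_pow_sum]
    rw [← Fin.prod_univ_eq_prod_range (fun j => r ^ ((j + 1) * g j)) N]
  have hinj : ∀ g ∈ u, ∀ g' ∈ u, φ g = φ g' → g = g' := by
    intro g hg g' hg' h
    ext i
    by_cases hi : i < N
    · exact congrFun h ⟨i, hi⟩
    · have e1 : g i = 0 := Finsupp.notMem_support_iff.1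
        (fun hc => hi (Finset.mem_range.1 ((hNM g hg).1 hc)))
      have e2 : g' i = 0 := Finsupp.notMem_support_iff.1
        (fun hc => hi (Finset.mem_range.1 ((hNM g' hg').1 hc)))
      rw [e1, e2]
  calc ∑ g ∈ u, F g = ∑ g ∈ u, ∏ j : Fin N, r ^ (((j : ℕ) + 1) * g j) :=
        Finset.sum_congr rfl hFφ
    _ = ∑ v ∈ u.image φ, ∏ j : Fin N, r ^ (((j : ℕ) + 1) * v j) := by
        rw [Finset.sum_image hinj]
    _ ≤ ∑ v ∈ Fintype.piFinset (fun _ : Fin N => Finset.range (M + 1)),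
          ∏ j : Fin N, r ^ (((j : ℕ) + 1) * v j) := by
        apply Finset.sum_le_sum_of_subset_of_nonneg
        · intro v hv
          obtain ⟨g, hg, rfl⟩ := Finset.mem_image.1 hv
          simp only [Fintype.mem_piFinset, Finset.mem_range]
          intro j
          exact Nat.lt_succ_of_le ((hNM g hg).2 j)
        · intro v _ _
          positivity
    _ = ∏ j : Fin N, ∑ k ∈ Finset.range (M + 1), r ^ (((j : ℕ) + 1) * k) := by
        rw [Finset.prod_univ_sum]
    _ ≤ ∏ j : Fin N, Real.exp (r ^ ((j : ℕ) + 1) / (1 - r)) := by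
        apply Finset.prod_le_prod
        · intro j _; positivity
        · intro j _
          have hpow : ∀ k, r ^ (((j : ℕ) + 1) * k) = (r ^ ((j : ℕ) + 1)) ^ k := fun k => by
            rw [pow_mul]
          simp only [hpow]
          have ha0 : (0:ℝ) ≤ r ^ ((j : ℕ) + 1) := by positivity
          have har : r ^ ((j : ℕ) + 1) ≤ r := by
            calc r ^ ((j : ℕ) + 1) ≤ r ^ 1 := pow_le_pow_of_le_one hr0 hr1.le (by omega)
              _ = r := pow_one r
          exact (aux_geom_partial ha0 (har.trans_lt hr1) _).trans (aux_inv_le_exp ha0 har hr1)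
    _ = Real.exp (∑ j : Fin N, r ^ ((j : ℕ) + 1) / (1 - r)) := (Real.exp_sum _ _).symm
    _ ≤ Real.exp (r / (1 - r) ^ 2) := by
        apply Real.exp_le_exp.2
        rw [← Finset.sum_div]
        have h2 : 0 < 1 - r := by linarith
        rw [div_le_iff₀ h2]
        have : ∑ j : Fin N, r ^ ((j : ℕ) + 1) = r * ∑ j : Fin N, r ^ (j : ℕ) := by
          rw [Finset.mul_sum]; exact Finset.sum_congr rfl (fun j _ => by rw [pow_succ]; ring)
        rw [this]
        have hgeo : ∑ j : Fin N, r ^ (j : ℕ) ≤ (1 - r)⁻¹ := by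
          rw [Fin.sum_univ_eq_sum_range]
          exact aux_geom_partial hr0 hr1 _
        calc r * ∑ j : Fin N, r ^ (j : ℕ) ≤ r * (1 - r)⁻¹ := by
              apply mul_le_mul_of_nonneg_left hgeo hr0
          _ = r / (1 - r) ^ 2 * (1 - r) := by field_simp

lemma summable_rpow_wt {r : ℝ} (hr0 : 0 ≤ r) (hr1 : r < 1) :
    Summable (fun lam : IntPartition => r ^ lam.wt) := by
  have h := (summable_finsupp hr0 hr1).comp_injective IntPartition.diffF_injective
  refine h.congr (fun lam => ?_)
  simp only [Function.comp_apply]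
  rw [lam.wt_eq_diffF_sum]

lemma summable_poly_pow {x : ℝ} (hx0 : 0 ≤ x) (hx1 : x < 1) (k : ℕ) :
    Summable (fun lam : IntPartition => ((lam.wt : ℝ) + 1) ^ k * x ^ lam.wt) := by
  set r := (1 + x) / 2 with hr
  have hr0 : 0 < r := by rw [hr]; linarith
  have hrx : x < r := by rw [hr]; linarith
  have hr1 : r < 1 := by rw [hr]; linarith
  set t := x / r with ht
  have ht0 : 0 ≤ t := by positivity
  have ht1 : t < 1 := (div_lt_one hr0).2 hrx
  have hsum : Summable (fun m : ℕ => ((m : ℝ) + 1) ^ k * t ^ m) := by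
    have hb : ∀ i : ℕ, Summable (fun m : ℕ => ((k.choose i : ℝ)) * (((m : ℝ)) ^ i * t ^ m)) :=
      fun i => (summable_pow_mul_geometric_of_norm_lt_one (R := ℝ) i
        (by rwa [Real.norm_eq_abs, abs_of_nonneg ht0])).mul_left _
    have h2 : Summable (fun m : ℕ =>
        ∑ i ∈ Finset.range (k + 1), (k.choose i : ℝ) * (((m : ℝ)) ^ i * t ^ m)) :=
      summable_sum (fun i _ => hb i)
    refine h2.congr (fun m => ?_)
    rw [add_pow, Finset.sum_mul]
    exact Finset.sum_congr rfl (fun i _ => by rw [one_pow]; ring)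
  set C := ∑' m : ℕ, ((m : ℝ) + 1) ^ k * t ^ m with hC
  have hCm : ∀ m : ℕ, ((m : ℝ) + 1) ^ k * t ^ m ≤ C :=
    fun m => Summable.le_tsum hsum m (fun m' _ => by positivity)
  have hmain : Summable (fun lam : IntPartition => C * r ^ lam.wt) :=
    (summable_rpow_wt hr0.le hr1).mul_left C
  apply hmain.of_nonneg_of_le (fun lam => by positivity)
  intro lam
  have key : ((lam.wt : ℝ) + 1) ^ k * x ^ lam.wt
      = (((lam.wt : ℝ) + 1) ^ k * t ^ lam.wt) * r ^ lam.wt := by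
    have htr : t * r = x := div_mul_cancel₀ x hr0.ne'
    rw [mul_assoc, ← mul_pow, htr]
  rw [key]
  exact mul_le_mul_of_nonneg_right (hCm _) (by positivity)


lemma varsigma_pos {z : ℝ} (hz : 0 < z) : 0 < varsigma z := by
  unfold varsigma
  rw [sub_pos]
  exact Real.exp_lt_exp.2 (by linarith)

lemma row_identity (z : ℝ) (i k : ℕ) :
    varsigma z * ∑ j ∈ Finset.range k, Real.exp (z * ((j : ℝ) - (i : ℝ)))
      = Real.exp (z * ((k : ℝ) - (i : ℝ) - 1/2)) - Real.exp (z * (-(i : ℝ) - 1/2)) := by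
  induction k with
  | zero =>
      rw [Finset.range_zero, Finset.sum_empty, mul_zero]
      rw [show (z * ((0:ℕ) - (i:ℝ) - 1/2)) = z * (-(i:ℝ) - 1/2) by push_cast; ring]
      ring
  | succ k ih =>
      rw [Finset.sum_range_succ, mul_add, ih]
      have key : varsigma z * Real.exp (z * ((k : ℝ) - (i : ℝ))) =
          Real.exp (z * (((k : ℝ) + 1) - (i : ℝ) - 1/2)) - Real.exp (z * ((k : ℝ) - (i : ℝ) - 1/2)) := by
        unfold varsigma
        rw [sub_mul, ← Real.exp_add, ← Real.exp_add,
          show z / 2 + z * ((k : ℝ) - (i : ℝ)) = z * (((k : ℝ) + 1) - (i : ℝ) - 1/2) by ring,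
          show -z / 2 + z * ((k : ℝ) - (i : ℝ)) = z * ((k : ℝ) - (i : ℝ) - 1/2) by ring]
      push_cast
      linarith [key]

lemma chz_eq_sum (z : ℝ) (lam : IntPartition) {N : ℕ} (hN : ∀ i, N ≤ i → lam.parts i = 0) :
    chz z lam = ∑ i ∈ Finset.range N, ∑ j ∈ Finset.range (lam.parts i),
      Real.exp (z * ((j : ℝ) - (i : ℝ))) := by
  apply tsum_eq_sum
  intro b hb
  rw [hN b (by simpa using hb)]
  simp

lemma chz_nonneg (z : ℝ) (lam : IntPartition) : 0 ≤ chz z lam := by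
  rw [chz_eq_sum z lam (fun i hi => lam.parts_bdd hi)]
  positivity

lemma chz_le {z : ℝ} (hz : 0 < z) (lam : IntPartition) :
    chz z lam ≤ (lam.wt : ℝ) * Real.exp (z * lam.wt) := by
  rw [chz_eq_sum z lam (fun i hi => lam.parts_bdd hi)]
  calc ∑ i ∈ Finset.range lam.bdd, ∑ j ∈ Finset.range (lam.parts i),
        Real.exp (z * ((j : ℝ) - (i : ℝ)))
      ≤ ∑ i ∈ Finset.range lam.bdd, ∑ j ∈ Finset.range (lam.parts i),
        Real.exp (z * lam.wt) := by
        apply Finset.sum_le_sum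
        intro i _
        apply Finset.sum_le_sum
        intro j hj
        apply Real.exp_le_exp.2
        apply mul_le_mul_of_nonneg_left _ hz.le
        have hjw : j < lam.wt ∨ (j < lam.parts i ∧ lam.parts i ≤ lam.wt) :=
          Or.inr ⟨Finset.mem_range.1 hj, lam.parts_le_wt i⟩
        have : (j : ℝ) ≤ (lam.wt : ℝ) := by
          rcases hjw with h | ⟨h1, h2⟩
          · exact_mod_cast h.le
          · exact_mod_cast (h1.trans_le h2).le
        have hi0 : (0:ℝ) ≤ (i:ℝ) := by positivity
        linarith
    _ = ∑ i ∈ Finset.range lam.bdd, (lam.parts i : ℝ) * Real.exp (z * lam.wt) := by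
        apply Finset.sum_congr rfl
        intro i _
        rw [Finset.sum_const, Finset.card_range, nsmul_eq_mul]
    _ = (lam.wt : ℝ) * Real.exp (z * lam.wt) := by
        rw [← Finset.sum_mul]
        congr 1
        rw [lam.wt_eq_sum (fun i hi => lam.parts_bdd hi)]
        push_cast
        rfl

lemma summable_tail {z : ℝ} (hz : 0 < z) :
    Summable (fun i : ℕ => Real.exp (z * (-(i : ℝ) - 1/2))) := by
  have h : ∀ i : ℕ, Real.exp (z * (-(i : ℝ) - 1/2))
      = Real.exp (-z / 2) * (Real.exp (-z)) ^ i := by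
    intro i
    rw [← Real.exp_nat_mul, ← Real.exp_add]
    congr 1
    ring
  refine Summable.congr ?_ (fun i => (h i).symm)
  exact ((summable_geometric_of_lt_one (Real.exp_nonneg _)
    (Real.exp_lt_one_iff.2 (by linarith))).mul_left _)

lemma tsum_tail {z : ℝ} (hz : 0 < z) :
    ∑' i : ℕ, Real.exp (z * (-(i : ℝ) - 1/2)) = (varsigma z)⁻¹ := by
  have h : ∀ i : ℕ, Real.exp (z * (-(i : ℝ) - 1/2))
      = Real.exp (-z / 2) * (Real.exp (-z)) ^ i := by
    intro i
    rw [← Real.exp_nat_mul, ← Real.exp_add]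
    congr 1
    ring
  rw [tsum_congr h, tsum_mul_left,
    tsum_geometric_of_lt_one (Real.exp_nonneg _) (Real.exp_lt_one_iff.2 (by linarith))]
  have h1 : varsigma z ≠ 0 := (varsigma_pos hz).ne'
  have h2 : (1 : ℝ) - Real.exp (-z) ≠ 0 := by
    have := Real.exp_lt_one_iff.2 (show -z < 0 by linarith)
    linarith
  have key : Real.exp (-z / 2) * varsigma z = 1 - Real.exp (-z) := by
    unfold varsigma
    rw [mul_sub, ← Real.exp_add, ← Real.exp_add,
      show -z/2 + z/2 = 0 by ring, show -z/2 + -z/2 = -z by ring, Real.exp_zero]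
  field_simp
  rw [neg_div] at key
  linarith [key]

lemma summable_W_terms {z : ℝ} (hz : 0 < z) (lam : IntPartition) :
    Summable (fun i : ℕ => Real.exp (z * ((lam.parts i : ℝ) - (i : ℝ) - 1/2))) := by
  have hg := summable_tail hz
  have hsplit : (fun i : ℕ => Real.exp (z * ((lam.parts i : ℝ) - (i : ℝ) - 1/2)))
      = fun i => (Real.exp (z * ((lam.parts i : ℝ) - (i : ℝ) - 1/2))
          - Real.exp (z * (-(i : ℝ) - 1/2))) + Real.exp (z * (-(i : ℝ) - 1/2)) := by
    funext i; ring
  rw [hsplit]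
  refine Summable.add ?_ hg
  apply summable_of_ne_finset_zero (s := Finset.range lam.bdd)
  intro i hi
  rw [lam.parts_bdd (by simpa using hi)]
  norm_num

lemma Wz_eq {z : ℝ} (hz : 0 < z) (lam : IntPartition) :
    Wz z lam = varsigma z * chz z lam + (varsigma z)⁻¹ := by
  have hg := summable_tail hz
  have hd : Summable (fun i : ℕ => Real.exp (z * ((lam.parts i : ℝ) - (i : ℝ) - 1/2))
      - Real.exp (z * (-(i : ℝ) - 1/2))) := by
    apply summable_of_ne_finset_zero (s := Finset.range lam.bdd)
    intro i hi
    rw [lam.parts_bdd (by simpa using hi)]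
    norm_num
  have hsplit : ∀ i : ℕ, Real.exp (z * ((lam.parts i : ℝ) - (i : ℝ) - 1/2))
      = (Real.exp (z * ((lam.parts i : ℝ) - (i : ℝ) - 1/2))
          - Real.exp (z * (-(i : ℝ) - 1/2))) + Real.exp (z * (-(i : ℝ) - 1/2)) := by
    intro i; ring
  unfold Wz
  rw [tsum_congr hsplit, Summable.tsum_add hd hg, tsum_tail hz]
  congr 1
  rw [tsum_eq_sum (s := Finset.range lam.bdd) (by
    intro i hi
    rw [lam.parts_bdd (by simpa using hi)]
    norm_num)]
  rw [chz_eq_sum z lam (fun i hi => lam.parts_bdd hi), Finset.mul_sum]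
  apply Finset.sum_congr rfl
  intro i _
  rw [row_identity z i (lam.parts i)]

lemma Wz_nonneg (z : ℝ) (lam : IntPartition) : 0 ≤ Wz z lam :=
  tsum_nonneg (fun i => (Real.exp_pos _).le)


/-- For `n ≥ 1`, `q ∈ (0,1)`, `z_1,…,z_n > 0` with
`q e^{z_1+⋯+z_n} < 1`, all the sums over partitions converge absolutely and
`∏_j ς(z_j) · ⟨ch_{z_1} ⋯ ch_{z_n}⟩_q
  = Σ_{S ⊆ {1,…,n}} (-1)^{n-|S|} ⟨∏_{i∈S} W_{z_i}⟩_q ∏_{j∉S} ς(z_j)⁻¹`. -/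
theorem stmt_8 (n : ℕ) (hn : 1 ≤ n) (q : ℝ) (hq0 : 0 < q) (hq1 : q < 1)
    (z : Fin n → ℝ) (hz : ∀ j, 0 < z j)
    (hqz : q * Real.exp (∑ j, z j) < 1) :
    Summable (fun lam : IntPartition => q ^ lam.wt) ∧
    Summable (fun lam : IntPartition =>
      (∏ j : Fin n, chz (z j) lam) * q ^ lam.wt) ∧
    (∀ S : Finset (Fin n),
      Summable (fun lam : IntPartition => (∏ i ∈ S, Wz (z i) lam) * q ^ lam.wt)) ∧
    (∏ j : Fin n, varsigma (z j)) * qbracket q (fun lam => ∏ j : Fin n, chz (z j) lam) =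
      ∑ S : Finset (Fin n),
        (-1 : ℝ) ^ (n - S.card) *
          qbracket q (fun lam => ∏ i ∈ S, Wz (z i) lam) *
          ∏ j ∈ Sᶜ, (varsigma (z j))⁻¹ := by
  have inst : Nonempty (Fin n) := ⟨⟨0, by omega⟩⟩
  set Z := ∑ j, z j with hZ
  have hZ0 : 0 < Z := Finset.sum_pos (fun j _ => hz j) Finset.univ_nonempty
  set E := q * Real.exp Z with hE
  have hE0 : 0 < E := by positivity
  have hE1 : E < 1 := hqz
  have hEpow : ∀ m : ℕ, Real.exp (Z * m) * q ^ m = E ^ m := by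
    intro m
    rw [mul_comm Z (m:ℝ), Real.exp_nat_mul, hE, mul_pow, mul_comm]
  have h_master : Summable (fun lam : IntPartition => ((lam.wt : ℝ) + 1) ^ n * E ^ lam.wt) :=
    summable_poly_pow hE0.le hE1 n
  -- summability of q ^ wt
  have hsum1 : Summable (fun lam : IntPartition => q ^ lam.wt) :=
    summable_rpow_wt hq0.le hq1
  -- bound on products of chz
  have hch_prod_le : ∀ lam : IntPartition, ∏ j : Fin n, chz (z j) lam
      ≤ ((lam.wt : ℝ) + 1) ^ n * Real.exp (Z * lam.wt) := by
    intro lam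
    calc ∏ j : Fin n, chz (z j) lam
        ≤ ∏ j : Fin n, (((lam.wt : ℝ) + 1) * Real.exp (z j * lam.wt)) := by
          apply Finset.prod_le_prod (fun j _ => chz_nonneg _ _)
          intro j _
          refine (chz_le (hz j) lam).trans ?_
          apply mul_le_mul_of_nonneg_right (by linarith [(lam.wt : ℝ)]) (Real.exp_nonneg _)
      _ = ((lam.wt : ℝ) + 1) ^ n * Real.exp (Z * lam.wt) := by
          rw [Finset.prod_mul_distrib, Finset.prod_const, Finset.card_univ, Fintype.card_fin,
            ← Real.exp_sum, ← Finset.sum_mul]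
  have hsum_ch : Summable (fun lam : IntPartition =>
      (∏ j : Fin n, chz (z j) lam) * q ^ lam.wt) := by
    apply h_master.of_nonneg_of_le
    · intro lam
      have : 0 ≤ ∏ j : Fin n, chz (z j) lam :=
        Finset.prod_nonneg (fun j _ => chz_nonneg _ _)
      positivity
    · intro lam
      calc (∏ j : Fin n, chz (z j) lam) * q ^ lam.wt
          ≤ (((lam.wt : ℝ) + 1) ^ n * Real.exp (Z * lam.wt)) * q ^ lam.wt := by
            apply mul_le_mul_of_nonneg_right (hch_prod_le lam) (by positivity)
        _ = ((lam.wt : ℝ) + 1) ^ n * E ^ lam.wt := by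
            rw [mul_assoc, hEpow]
  -- bounds on Wz
  have hW_le : ∀ (j : Fin n) (lam : IntPartition), Wz (z j) lam
      ≤ (varsigma (z j) + (varsigma (z j))⁻¹) * (((lam.wt : ℝ) + 1) * Real.exp (z j * lam.wt)) := by
    intro j lam
    rw [Wz_eq (hz j) lam]
    have h1 : chz (z j) lam ≤ (lam.wt : ℝ) * Real.exp (z j * lam.wt) := chz_le (hz j) lam
    have h2 : 0 < varsigma (z j) := varsigma_pos (hz j)
    have h3 : 0 < (varsigma (z j))⁻¹ := by positivity
    have h4 : (1 : ℝ) ≤ Real.exp (z j * lam.wt) :=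
      Real.one_le_exp (mul_nonneg (hz j).le (Nat.cast_nonneg _))
    have h5 : (0:ℝ) ≤ (lam.wt : ℝ) := by positivity
    nlinarith [mul_le_mul_of_nonneg_left h1 h2.le,
      mul_le_mul_of_nonneg_left h4 (mul_nonneg h3.le (by linarith : (0:ℝ) ≤ (lam.wt:ℝ)+1))]
  set K : Fin n → ℝ := fun j => varsigma (z j) + (varsigma (z j))⁻¹ with hK
  have hK1 : ∀ j, 1 ≤ K j := by
    intro j
    have h2 : 0 < varsigma (z j) := varsigma_pos (hz j)
    rw [hK]
    have := sq_nonneg (varsigma (z j) - 1)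
    have h6 : varsigma (z j) * (varsigma (z j) + (varsigma (z j))⁻¹)
        = varsigma (z j) ^ 2 + 1 := by field_simp
    nlinarith
  have hWS_le : ∀ (S : Finset (Fin n)) (lam : IntPartition),
      (∏ i ∈ S, Wz (z i) lam) ≤ (∏ j : Fin n, K j) * (((lam.wt : ℝ) + 1) ^ n * Real.exp (Z * lam.wt)) := by
    intro S lam
    have hfac1 : ∀ j : Fin n, (1:ℝ) ≤ K j * (((lam.wt : ℝ) + 1) * Real.exp (z j * lam.wt)) := by
      intro j
      have h4 : (1 : ℝ) ≤ Real.exp (z j * lam.wt) :=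
        Real.one_le_exp (mul_nonneg (hz j).le (Nat.cast_nonneg _))
      have h5 : (1:ℝ) ≤ (lam.wt : ℝ) + 1 := by
        have : (0:ℝ) ≤ (lam.wt : ℝ) := by positivity
        linarith
      have h6 : (1:ℝ) ≤ ((lam.wt : ℝ) + 1) * Real.exp (z j * lam.wt) := by nlinarith
      nlinarith [mul_le_mul (hK1 j) h6 zero_le_one (le_trans zero_le_one (hK1 j))]
    calc ∏ i ∈ S, Wz (z i) lam
        ≤ ∏ i ∈ S, (K i * (((lam.wt : ℝ) + 1) * Real.exp (z i * lam.wt))) :=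
          Finset.prod_le_prod (fun i _ => Wz_nonneg _ _) (fun i _ => hW_le i lam)
      _ ≤ ∏ i : Fin n, (K i * (((lam.wt : ℝ) + 1) * Real.exp (z i * lam.wt))) := by
          rw [← Finset.prod_sdiff (Finset.subset_univ S)]
          have hone : (1:ℝ) ≤ ∏ i ∈ Finset.univ \ S, (K i * (((lam.wt : ℝ) + 1) * Real.exp (z i * lam.wt))) := by
            calc (1:ℝ) = ∏ i ∈ Finset.univ \ S, (1:ℝ) := by rw [Finset.prod_const_one]
              _ ≤ _ := Finset.prod_le_prod (fun i _ => zero_le_one) (fun i _ => hfac1 i)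
          have hnn : (0:ℝ) ≤ ∏ i ∈ S, (K i * (((lam.wt : ℝ) + 1) * Real.exp (z i * lam.wt))) := by
            apply Finset.prod_nonneg
            intro i _
            exact le_trans zero_le_one (hfac1 i)
          nlinarith
      _ = (∏ j : Fin n, K j) * (((lam.wt : ℝ) + 1) ^ n * Real.exp (Z * lam.wt)) := by
          rw [Finset.prod_mul_distrib, Finset.prod_mul_distrib, Finset.prod_const,
            Finset.card_univ, Fintype.card_fin, ← Real.exp_sum, ← Finset.sum_mul]
  have hsum_W : ∀ S : Finset (Fin n),
      Summable (fun lam : IntPartition => (∏ i ∈ S, Wz (z i) lam) * q ^ lam.wt) := by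
    intro S
    apply (h_master.mul_left (∏ j : Fin n, K j)).of_nonneg_of_le
    · intro lam
      have : 0 ≤ ∏ i ∈ S, Wz (z i) lam := Finset.prod_nonneg (fun i _ => Wz_nonneg _ _)
      positivity
    · intro lam
      calc (∏ i ∈ S, Wz (z i) lam) * q ^ lam.wt
          ≤ ((∏ j : Fin n, K j) * (((lam.wt : ℝ) + 1) ^ n * Real.exp (Z * lam.wt))) * q ^ lam.wt :=
            mul_le_mul_of_nonneg_right (hWS_le S lam) (by positivity)
        _ = (∏ j : Fin n, K j) * (((lam.wt : ℝ) + 1) ^ n * E ^ lam.wt) := by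
            rw [mul_assoc, mul_assoc, hEpow]
  refine ⟨hsum1, hsum_ch, hsum_W, ?_⟩
  -- the identity
  unfold qbracket
  rw [mul_div_assoc']
  have hRHS : ∀ S : Finset (Fin n),
      (-1 : ℝ) ^ (n - S.card) *
        ((∑' lam : IntPartition, (∏ i ∈ S, Wz (z i) lam) * q ^ lam.wt) /
          (∑' lam : IntPartition, q ^ lam.wt)) *
        ∏ j ∈ Sᶜ, (varsigma (z j))⁻¹
      = (((-1 : ℝ) ^ (n - S.card) * ∏ j ∈ Sᶜ, (varsigma (z j))⁻¹) *
          (∑' lam : IntPartition, (∏ i ∈ S, Wz (z i) lam) * q ^ lam.wt)) /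
          (∑' lam : IntPartition, q ^ lam.wt) := by
    intro S
    ring
  rw [Finset.sum_congr rfl (fun S _ => hRHS S), ← Finset.sum_div]
  congr 1
  -- numerator identity
  have hpoint : ∀ (j : Fin n) (lam : IntPartition),
      varsigma (z j) * chz (z j) lam = Wz (z j) lam + -(varsigma (z j))⁻¹ := by
    intro j lam
    rw [Wz_eq (hz j) lam]
    ring
  calc (∏ j : Fin n, varsigma (z j)) * ∑' lam : IntPartition, (∏ j : Fin n, chz (z j) lam) * q ^ lam.wt
      = ∑' lam : IntPartition, (∏ j : Fin n, (Wz (z j) lam + -(varsigma (z j))⁻¹)) * q ^ lam.wt := by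
        rw [← tsum_mul_left]
        apply tsum_congr
        intro lam
        rw [← mul_assoc, ← Finset.prod_mul_distrib]
        congr 1
        exact Finset.prod_congr rfl (fun j _ => hpoint j lam)
    _ = ∑' lam : IntPartition, ∑ S : Finset (Fin n),
          ((∏ i ∈ S, Wz (z i) lam) * ∏ j ∈ Finset.univ \ S, -(varsigma (z j))⁻¹) * q ^ lam.wt := by
        apply tsum_congr
        intro lam
        rw [Finset.prod_add, Finset.powerset_univ, Finset.sum_mul]
    _ = ∑ S : Finset (Fin n), ∑' lam : IntPartition,
          ((∏ i ∈ S, Wz (z i) lam) * ∏ j ∈ Finset.univ \ S, -(varsigma (z j))⁻¹) * q ^ lam.wt := by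
        apply Summable.tsum_finsetSum
        intro S _
        have := (hsum_W S).mul_right (∏ j ∈ Finset.univ \ S, -(varsigma (z j))⁻¹)
        refine this.congr (fun lam => ?_)
        ring
    _ = ∑ S : Finset (Fin n),
          (((-1 : ℝ) ^ (n - S.card) * ∏ j ∈ Sᶜ, (varsigma (z j))⁻¹) *
            (∑' lam : IntPartition, (∏ i ∈ S, Wz (z i) lam) * q ^ lam.wt)) := by
        apply Finset.sum_congr rfl
        intro S _
        have hcompl : Finset.univ \ S = Sᶜ := (Finset.compl_eq_univ_sdiff S).symm
        have hneg : ∏ j ∈ Sᶜ, -(varsigma (z j))⁻¹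
            = (-1 : ℝ) ^ (n - S.card) * ∏ j ∈ Sᶜ, (varsigma (z j))⁻¹ := by
          have : ∀ j : Fin n, -(varsigma (z j))⁻¹ = (-1) * (varsigma (z j))⁻¹ := fun j => by ring
          rw [Finset.prod_congr rfl (fun j _ => this j), Finset.prod_mul_distrib,
            Finset.prod_const, Finset.card_compl, Fintype.card_fin]
        rw [hcompl, ← tsum_mul_left]
        apply tsum_congr
        intro lam
        rw [hneg]
        ring
end
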